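/- The generating function S(t,z) = Σ_{n ≥ 1} S_n(t) z^n of the descent polynomials of separable permutations satisfies the cubic functional equation S = z + (1+t) z S + t z S^2 + t S^3, as an identity of formal power series in z over ℚ[t]. -/

import Mathlib

open Polynomial Finset

/-- Values of a permutation of `Fin n` as a function `ℕ → ℕ` (0-indexed). -/
def permVal {n : ℕ} (π : Equiv.Perm (Fin n)) (i : ℕ) : ℕ :=
  if h : i < n then (π ⟨i, h⟩ : ℕ) else 0

/-- Number of descents of a permutation. -/
def desNum {n : ℕ} (π : Equiv.Perm (Fin n)) : ℕ :=
  ((Finset.range (n - 1)).filter (fun i => permVal π (i + 1) < permVal π i)).card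

/-- `π` contains the pattern given by the word `σ`. -/
def ContainsPat {n k : ℕ} (π : Equiv.Perm (Fin n)) (σ : Fin k → ℕ) : Prop :=
  ∃ f : Fin k → Fin n, (∀ i j : Fin k, i < j → f i < f j) ∧
    ∀ i j : Fin k, σ i < σ j ↔ π (f i) < π (f j)

/-- A separable permutation avoids both 2413 and 3142. -/
def SepPerm {n : ℕ} (π : Equiv.Perm (Fin n)) : Prop :=
  ¬ ContainsPat π ![2, 4, 1, 3] ∧ ¬ ContainsPat π ![3, 1, 4, 2]

open scoped Classical in
/-- Descent polynomial of separable permutations. -/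
noncomputable def sepPoly (n : ℕ) : Polynomial ℤ :=
  ∑ π ∈ Finset.univ.filter (fun π : Equiv.Perm (Fin n) => SepPerm π), X ^ desNum π


/-- The generating function `S(t,z) = ∑_{n ≥ 1} S_n(t) zⁿ` as a formal power series in `z`
over `ℚ[t]`. -/
noncomputable def sepSeries : PowerSeries (Polynomial ℚ) :=
  PowerSeries.mk fun n => if n = 0 then 0 else (sepPoly n).map (Int.castRingHom ℚ)



namespace SepAux

def IsCut {n : ℕ} (π : Equiv.Perm (Fin n)) (a : ℕ) : Prop :=
  ∀ i : Fin n, (i : ℕ) < a → (π i : ℕ) < a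

def IsCoCut {n : ℕ} (π : Equiv.Perm (Fin n)) (a : ℕ) : Prop :=
  ∀ i : Fin n, (i : ℕ) < a → n - a ≤ (π i : ℕ)

theorem card_filter_lt {n a : ℕ} (ha : a ≤ n) :
    (Finset.univ.filter (fun i : Fin n => (i : ℕ) < a)).card = a := by
  classical
  have h1 : Finset.filter (fun i => i < a) (Finset.range n) = Finset.range a := by
    ext i; simp only [Finset.mem_filter, Finset.mem_range]; omega
  rw [Finset.card_filter, Fin.sum_univ_eq_sum_range (fun i => if i < a then 1 else 0),
    ← Finset.card_filter, h1, Finset.card_range]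

theorem card_filter_ge {n a : ℕ} (ha : a ≤ n) :
    (Finset.univ.filter (fun i : Fin n => n - a ≤ (i : ℕ))).card = a := by
  classical
  have h1 : Finset.filter (fun i => n - a ≤ i) (Finset.range n) = Finset.Ico (n - a) n := by
    ext i; simp only [Finset.mem_filter, Finset.mem_range, Finset.mem_Ico]; omega
  rw [Finset.card_filter, Fin.sum_univ_eq_sum_range (fun i => if n - a ≤ i then 1 else 0),
    ← Finset.card_filter, h1, Nat.card_Ico]
  omega

theorem cut_iff {n : ℕ} {π : Equiv.Perm (Fin n)} {a : ℕ} (h : IsCut π a) :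
    ∀ i : Fin n, (π i : ℕ) < a ↔ (i : ℕ) < a := by
  classical
  have hsub : (Finset.univ.filter (fun i : Fin n => (i : ℕ) < a)).image π ⊆
      Finset.univ.filter (fun i : Fin n => (i : ℕ) < a) := by
    intro x hx
    simp only [Finset.mem_image, Finset.mem_filter, Finset.mem_univ, true_and] at hx ⊢
    obtain ⟨i, hi, rfl⟩ := hx
    exact h i hi
  have hcard : ((Finset.univ.filter (fun i : Fin n => (i : ℕ) < a)).image π).card =
      (Finset.univ.filter (fun i : Fin n => (i : ℕ) < a)).card :=
    Finset.card_image_of_injective _ π.injective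
  have heq := Finset.eq_of_subset_of_card_le hsub (le_of_eq hcard.symm)
  intro i
  constructor
  · intro hpi
    have : π i ∈ (Finset.univ.filter (fun i : Fin n => (i : ℕ) < a)) := by simp [hpi]
    rw [← heq] at this
    simp only [Finset.mem_image, Finset.mem_filter, Finset.mem_univ, true_and] at this
    obtain ⟨j, hj, hje⟩ := this
    rwa [← π.injective hje]
  · exact h i

theorem cocut_iff {n : ℕ} {π : Equiv.Perm (Fin n)} {a : ℕ} (ha : a ≤ n) (h : IsCoCut π a) :
    ∀ i : Fin n, n - a ≤ (π i : ℕ) ↔ (i : ℕ) < a := by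
  classical
  have hsub : (Finset.univ.filter (fun i : Fin n => (i : ℕ) < a)).image π ⊆
      Finset.univ.filter (fun i : Fin n => n - a ≤ (i : ℕ)) := by
    intro x hx
    simp only [Finset.mem_image, Finset.mem_filter, Finset.mem_univ, true_and] at hx ⊢
    obtain ⟨i, hi, rfl⟩ := hx
    exact h i hi
  have hcard : ((Finset.univ.filter (fun i : Fin n => (i : ℕ) < a)).image π).card =
      (Finset.univ.filter (fun i : Fin n => n - a ≤ (i : ℕ))).card := by
    rw [Finset.card_image_of_injective _ π.injective, card_filter_lt ha, card_filter_ge ha]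
  have heq := Finset.eq_of_subset_of_card_le hsub (le_of_eq hcard.symm)
  intro i
  constructor
  · intro hpi
    have : π i ∈ (Finset.univ.filter (fun i : Fin n => n - a ≤ (i : ℕ))) := by
      simp only [Finset.mem_filter, Finset.mem_univ, true_and]; exact hpi
    rw [← heq] at this
    simp only [Finset.mem_image, Finset.mem_filter, Finset.mem_univ, true_and] at this
    obtain ⟨j, hj, hje⟩ := this
    rwa [← π.injective hje]
  · exact h i

end SepAux

namespace SepAux

/-- Direct sum of permutations. -/
def dsum {a b : ℕ} (α : Equiv.Perm (Fin a)) (β : Equiv.Perm (Fin b)) :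
    Equiv.Perm (Fin (a + b)) :=
  finSumFinEquiv.symm.trans ((Equiv.sumCongr α β).trans finSumFinEquiv)

/-- Skew sum of permutations. -/
def ssum {a b : ℕ} (α : Equiv.Perm (Fin a)) (β : Equiv.Perm (Fin b)) :
    Equiv.Perm (Fin (a + b)) :=
  finSumFinEquiv.symm.trans ((Equiv.sumCongr α β).trans
    ((Equiv.sumComm (Fin a) (Fin b)).trans (finSumFinEquiv.trans (finCongr (Nat.add_comm b a)))))

theorem dsum_val_lo {a b : ℕ} (α : Equiv.Perm (Fin a)) (β : Equiv.Perm (Fin b))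
    (i : Fin (a + b)) (h : (i : ℕ) < a) : ((dsum α β) i : ℕ) = (α ⟨i, h⟩ : ℕ) := by
  obtain ⟨j, rfl⟩ : ∃ j : Fin a, i = Fin.castAdd b j := ⟨⟨i, h⟩, by ext; simp⟩
  have hj : (⟨((Fin.castAdd b j : Fin (a+b)) : ℕ), h⟩ : Fin a) = j := by ext; simp
  rw [hj]
  simp only [dsum, Equiv.trans_apply, finSumFinEquiv_symm_apply_castAdd, Equiv.sumCongr_apply,
    Sum.map_inl, finSumFinEquiv_apply_left, Fin.coe_castAdd]

theorem dsum_val_hi {a b : ℕ} (α : Equiv.Perm (Fin a)) (β : Equiv.Perm (Fin b))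
    (i : Fin (a + b)) (h : a ≤ (i : ℕ)) :
    ((dsum α β) i : ℕ) = a + (β ⟨i - a, by omega⟩ : ℕ) := by
  obtain ⟨j, rfl⟩ : ∃ j : Fin b, i = Fin.natAdd a j := ⟨⟨i - a, by omega⟩, by ext; simp; omega⟩
  have hj : (⟨((Fin.natAdd a j : Fin (a+b)) : ℕ) - a, by omega⟩ : Fin b) = j := by ext; simp
  rw [hj]
  simp only [dsum, Equiv.trans_apply, finSumFinEquiv_symm_apply_natAdd, Equiv.sumCongr_apply,
    Sum.map_inr, finSumFinEquiv_apply_right, Fin.coe_natAdd]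

theorem ssum_val_lo {a b : ℕ} (α : Equiv.Perm (Fin a)) (β : Equiv.Perm (Fin b))
    (i : Fin (a + b)) (h : (i : ℕ) < a) : ((ssum α β) i : ℕ) = b + (α ⟨i, h⟩ : ℕ) := by
  obtain ⟨j, rfl⟩ : ∃ j : Fin a, i = Fin.castAdd b j := ⟨⟨i, h⟩, by ext; simp⟩
  have hj : (⟨((Fin.castAdd b j : Fin (a+b)) : ℕ), h⟩ : Fin a) = j := by ext; simp
  rw [hj]
  simp only [ssum, Equiv.trans_apply, finSumFinEquiv_symm_apply_castAdd, Equiv.sumCongr_apply,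
    Sum.map_inl, Equiv.sumComm_apply, Sum.swap_inl, finSumFinEquiv_apply_right, finCongr_apply,
    Fin.coe_cast, Fin.coe_natAdd]

theorem ssum_val_hi {a b : ℕ} (α : Equiv.Perm (Fin a)) (β : Equiv.Perm (Fin b))
    (i : Fin (a + b)) (h : a ≤ (i : ℕ)) :
    ((ssum α β) i : ℕ) = (β ⟨i - a, by omega⟩ : ℕ) := by
  obtain ⟨j, rfl⟩ : ∃ j : Fin b, i = Fin.natAdd a j := ⟨⟨i - a, by omega⟩, by ext; simp; omega⟩
  have hj : (⟨((Fin.natAdd a j : Fin (a+b)) : ℕ) - a, by omega⟩ : Fin b) = j := by ext; simp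
  rw [hj]
  simp only [ssum, Equiv.trans_apply, finSumFinEquiv_symm_apply_natAdd, Equiv.sumCongr_apply,
    Sum.map_inr, Equiv.sumComm_apply, Sum.swap_inr, finSumFinEquiv_apply_left, finCongr_apply,
    Fin.coe_cast, Fin.coe_castAdd]

end SepAux

namespace SepAux

theorem permVal_lt {n : ℕ} (π : Equiv.Perm (Fin n)) (i : ℕ) (hn : 0 < n) :
    permVal π i < n := by
  unfold permVal; split
  · exact (π _).2
  · exact hn

theorem permVal_dsum {a b : ℕ} (α : Equiv.Perm (Fin a)) (β : Equiv.Perm (Fin b)) (i : ℕ)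
    (h : i < a + b) :
    permVal (dsum α β) i = if i < a then permVal α i else a + permVal β (i - a) := by
  simp only [permVal]
  rw [dif_pos h]
  rcases Nat.lt_or_ge i a with hia | hia
  · rw [if_pos hia, dif_pos hia, dsum_val_lo α β ⟨i, h⟩ hia]
  · rw [if_neg (by omega), dif_pos (show i - a < b by omega), dsum_val_hi α β ⟨i, h⟩ hia]

theorem permVal_ssum {a b : ℕ} (α : Equiv.Perm (Fin a)) (β : Equiv.Perm (Fin b)) (i : ℕ)
    (h : i < a + b) :
    permVal (ssum α β) i = if i < a then b + permVal α i else permVal β (i - a) := by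
  simp only [permVal]
  rw [dif_pos h]
  rcases Nat.lt_or_ge i a with hia | hia
  · rw [if_pos hia, dif_pos hia, ssum_val_lo α β ⟨i, h⟩ hia]
  · rw [if_neg (by omega), dif_pos (show i - a < b by omega), ssum_val_hi α β ⟨i, h⟩ hia]

theorem desNum_eq_sum {n : ℕ} (π : Equiv.Perm (Fin n)) :
    desNum π = ∑ i ∈ Finset.range (n - 1),
      (if permVal π (i + 1) < permVal π i then 1 else 0) := by
  classical
  rw [desNum, Finset.card_filter]

theorem desNum_dsum {a b : ℕ} (ha : 0 < a) (hb : 0 < b)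
    (α : Equiv.Perm (Fin a)) (β : Equiv.Perm (Fin b)) :
    desNum (dsum α β) = desNum α + desNum β := by
  classical
  rw [desNum_eq_sum, desNum_eq_sum, desNum_eq_sum]
  have hsplit : a + b - 1 = (a - 1) + (1 + (b - 1)) := by omega
  rw [hsplit, Finset.sum_range_add, Finset.sum_range_add, Finset.sum_range_one]
  have t1 : ∀ i ∈ Finset.range (a - 1),
      (if permVal (dsum α β) (i + 1) < permVal (dsum α β) i then (1:ℕ) else 0)
      = if permVal α (i + 1) < permVal α i then 1 else 0 := by
    intro i hi
    rw [Finset.mem_range] at hi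
    rw [permVal_dsum α β i (by omega), permVal_dsum α β (i+1) (by omega),
      if_pos (by omega : i < a), if_pos (by omega : i + 1 < a)]
  have t2 : (if permVal (dsum α β) (a - 1 + 0 + 1) < permVal (dsum α β) (a - 1 + 0)
      then (1:ℕ) else 0) = 0 := by
    rw [permVal_dsum α β (a-1+0) (by omega), permVal_dsum α β (a-1+0+1) (by omega),
      if_pos (by omega : a - 1 + 0 < a), if_neg (by omega : ¬ a - 1 + 0 + 1 < a)]
    have := permVal_lt α (a-1+0) ha
    rw [if_neg]; omega
  have t3 : ∀ i ∈ Finset.range (b - 1),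
      (if permVal (dsum α β) (a - 1 + (1 + i) + 1) < permVal (dsum α β) (a - 1 + (1 + i))
      then (1:ℕ) else 0) = if permVal β (i + 1) < permVal β i then 1 else 0 := by
    intro i hi
    rw [Finset.mem_range] at hi
    have e1 : permVal (dsum α β) (a - 1 + (1 + i)) = a + permVal β i := by
      rw [permVal_dsum α β _ (by omega), if_neg (by omega)]
      have h1 : a - 1 + (1 + i) - a = i := by omega
      rw [h1]
    have e2 : permVal (dsum α β) (a - 1 + (1 + i) + 1) = a + permVal β (i + 1) := by
      rw [permVal_dsum α β _ (by omega), if_neg (by omega)]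
      have h2 : a - 1 + (1 + i) + 1 - a = i + 1 := by omega
      rw [h2]
    rw [e1, e2]
    simp only [Nat.add_lt_add_iff_left]
  rw [Finset.sum_congr rfl t1, Finset.sum_congr rfl t3, t2]
  omega

theorem desNum_ssum {a b : ℕ} (ha : 0 < a) (hb : 0 < b)
    (α : Equiv.Perm (Fin a)) (β : Equiv.Perm (Fin b)) :
    desNum (ssum α β) = desNum α + desNum β + 1 := by
  classical
  rw [desNum_eq_sum, desNum_eq_sum, desNum_eq_sum]
  have hsplit : a + b - 1 = (a - 1) + (1 + (b - 1)) := by omega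
  rw [hsplit, Finset.sum_range_add, Finset.sum_range_add, Finset.sum_range_one]
  have t1 : ∀ i ∈ Finset.range (a - 1),
      (if permVal (ssum α β) (i + 1) < permVal (ssum α β) i then (1:ℕ) else 0)
      = if permVal α (i + 1) < permVal α i then 1 else 0 := by
    intro i hi
    rw [Finset.mem_range] at hi
    rw [permVal_ssum α β i (by omega), permVal_ssum α β (i+1) (by omega),
      if_pos (by omega : i < a), if_pos (by omega : i + 1 < a)]
    simp only [Nat.add_lt_add_iff_left]
  have t2 : (if permVal (ssum α β) (a - 1 + 0 + 1) < permVal (ssum α β) (a - 1 + 0)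
      then (1:ℕ) else 0) = 1 := by
    rw [permVal_ssum α β (a-1+0) (by omega), permVal_ssum α β (a-1+0+1) (by omega),
      if_pos (by omega : a - 1 + 0 < a), if_neg (by omega : ¬ a - 1 + 0 + 1 < a)]
    have := permVal_lt β (a - 1 + 0 + 1 - a) hb
    rw [if_pos]; omega
  have t3 : ∀ i ∈ Finset.range (b - 1),
      (if permVal (ssum α β) (a - 1 + (1 + i) + 1) < permVal (ssum α β) (a - 1 + (1 + i))
      then (1:ℕ) else 0) = if permVal β (i + 1) < permVal β i then 1 else 0 := by
    intro i hi
    rw [Finset.mem_range] at hi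
    have e1 : permVal (ssum α β) (a - 1 + (1 + i)) = permVal β i := by
      rw [permVal_ssum α β _ (by omega), if_neg (by omega)]
      have h1 : a - 1 + (1 + i) - a = i := by omega
      rw [h1]
    have e2 : permVal (ssum α β) (a - 1 + (1 + i) + 1) = permVal β (i + 1) := by
      rw [permVal_ssum α β _ (by omega), if_neg (by omega)]
      have h2 : a - 1 + (1 + i) + 1 - a = i + 1 := by omega
      rw [h2]
    rw [e1, e2]
  rw [Finset.sum_congr rfl t1, Finset.sum_congr rfl t3, t2]
  omega

end SepAux

namespace SepAux

theorem containsPat_dsum_left {a b k : ℕ} {α : Equiv.Perm (Fin a)} {β : Equiv.Perm (Fin b)}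
    {p : Fin k → ℕ} (h : ContainsPat α p) : ContainsPat (dsum α β) p := by
  obtain ⟨f, hmono, hord⟩ := h
  refine ⟨fun i => ⟨f i, by omega⟩, ?_, ?_⟩
  · intro i j hij
    have := hmono i j hij
    simp only [Fin.lt_def] at this ⊢
    exact this
  · intro i j
    rw [hord i j]
    simp only [Fin.lt_def]
    rw [dsum_val_lo α β _ (f i).2, dsum_val_lo α β _ (f j).2]

theorem containsPat_dsum_right {a b k : ℕ} {α : Equiv.Perm (Fin a)} {β : Equiv.Perm (Fin b)}
    {p : Fin k → ℕ} (h : ContainsPat β p) : ContainsPat (dsum α β) p := by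
  obtain ⟨f, hmono, hord⟩ := h
  refine ⟨fun i => ⟨a + f i, by omega⟩, ?_, ?_⟩
  · intro i j hij
    have := hmono i j hij
    simp only [Fin.lt_def] at this ⊢
    omega
  · intro i j
    rw [hord i j]
    simp only [Fin.lt_def]
    rw [dsum_val_hi α β _ (by simp), dsum_val_hi α β _ (by simp)]
    have e : ∀ m : Fin k, (⟨a + (f m : ℕ) - a, by omega⟩ : Fin b) = f m := by
      intro m; ext; simp
    rw [e i, e j]
    omega

theorem containsPat_ssum_left {a b k : ℕ} {α : Equiv.Perm (Fin a)} {β : Equiv.Perm (Fin b)}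
    {p : Fin k → ℕ} (h : ContainsPat α p) : ContainsPat (ssum α β) p := by
  obtain ⟨f, hmono, hord⟩ := h
  refine ⟨fun i => ⟨f i, by omega⟩, ?_, ?_⟩
  · intro i j hij
    have := hmono i j hij
    simp only [Fin.lt_def] at this ⊢
    exact this
  · intro i j
    rw [hord i j]
    simp only [Fin.lt_def]
    rw [ssum_val_lo α β _ (f i).2, ssum_val_lo α β _ (f j).2]
    have e : ∀ m : Fin k, (⟨((⟨(f m : ℕ), by omega⟩ : Fin (a+b)) : ℕ), (f m).2⟩ : Fin a) = f m := by
      intro m; ext; simp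
    rw [e i, e j]
    omega

theorem containsPat_ssum_right {a b k : ℕ} {α : Equiv.Perm (Fin a)} {β : Equiv.Perm (Fin b)}
    {p : Fin k → ℕ} (h : ContainsPat β p) : ContainsPat (ssum α β) p := by
  obtain ⟨f, hmono, hord⟩ := h
  refine ⟨fun i => ⟨a + f i, by omega⟩, ?_, ?_⟩
  · intro i j hij
    have := hmono i j hij
    simp only [Fin.lt_def] at this ⊢
    omega
  · intro i j
    rw [hord i j]
    simp only [Fin.lt_def]
    rw [ssum_val_hi α β _ (by simp), ssum_val_hi α β _ (by simp)]
    have e : ∀ m : Fin k, (⟨a + (f m : ℕ) - a, by omega⟩ : Fin b) = f m := by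
      intro m; ext; simp
    rw [e i, e j]

end SepAux

namespace SepAux

theorem dsum_2413 {a b : ℕ} {α : Equiv.Perm (Fin a)} {β : Equiv.Perm (Fin b)}
    (h : ContainsPat (dsum α β) ![2,4,1,3]) :
    ContainsPat α ![2,4,1,3] ∨ ContainsPat β ![2,4,1,3] := by
  obtain ⟨f, hmono, hord⟩ := h
  have m01 : (f 0 : ℕ) < f 1 := hmono 0 1 (by decide)
  have m12 : (f 1 : ℕ) < f 2 := hmono 1 2 (by decide)
  have m23 : (f 2 : ℕ) < f 3 := hmono 2 3 (by decide)
  have c20 : ((dsum α β) (f 2) : ℕ) < (dsum α β) (f 0) := (hord 2 0).mp (by decide)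
  have c03 : ((dsum α β) (f 0) : ℕ) < (dsum α β) (f 3) := (hord 0 3).mp (by decide)
  have c31 : ((dsum α β) (f 3) : ℕ) < (dsum α β) (f 1) := (hord 3 1).mp (by decide)
  by_cases hl : (f 3 : ℕ) < a
  · left
    have hlt : ∀ i : Fin 4, (f i : ℕ) < a := by
      intro i; fin_cases i <;> simp <;> omega
    refine ⟨fun i => ⟨f i, hlt i⟩, ?_, ?_⟩
    · intro i j hij
      have := hmono i j hij
      simp only [Fin.lt_def] at this ⊢
      exact this
    · intro i j
      rw [hord i j]
      simp only [Fin.lt_def]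
      rw [dsum_val_lo α β _ (hlt i), dsum_val_lo α β _ (hlt j)]
  · by_cases hh : a ≤ (f 0 : ℕ)
    · right
      have hge : ∀ i : Fin 4, a ≤ (f i : ℕ) := by
        intro i; fin_cases i <;> simp <;> omega
      refine ⟨fun i => ⟨f i - a, by have := (f i).2; omega⟩, ?_, ?_⟩
      · intro i j hij
        have := hmono i j hij
        have hi := hge i
        have hj := hge j
        simp only [Fin.lt_def] at this ⊢
        omega
      · intro i j
        rw [hord i j]
        simp only [Fin.lt_def]
        rw [dsum_val_hi α β _ (hge i), dsum_val_hi α β _ (hge j)]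
        omega
    · exfalso
      have hv : ∀ i : Fin 4, ((f i : ℕ) < a → ((dsum α β) (f i) : ℕ) < a) ∧
          (a ≤ (f i : ℕ) → a ≤ ((dsum α β) (f i) : ℕ)) := by
        intro i
        constructor
        · intro hia; rw [dsum_val_lo α β _ hia]; exact (α _).2
        · intro hia; rw [dsum_val_hi α β _ hia]; omega
      have h0 := hv 0; have h1 := hv 1; have h2 := hv 2; have h3 := hv 3
      omega

end SepAux

namespace SepAux


theorem dsum_3142 {a b : ℕ} {α : Equiv.Perm (Fin a)} {β : Equiv.Perm (Fin b)}
    (h : ContainsPat (dsum α β) ![3,1,4,2]) :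
    ContainsPat α ![3,1,4,2] ∨ ContainsPat β ![3,1,4,2] := by
  obtain ⟨f, hmono, hord⟩ := h
  have m01 : (f 0 : ℕ) < f 1 := hmono 0 1 (by decide)
  have m12 : (f 1 : ℕ) < f 2 := hmono 1 2 (by decide)
  have m23 : (f 2 : ℕ) < f 3 := hmono 2 3 (by decide)
  have c13 : ((dsum α β) (f 1) : ℕ) < (dsum α β) (f 3) := (hord 1 3).mp (by decide)
  have c30 : ((dsum α β) (f 3) : ℕ) < (dsum α β) (f 0) := (hord 3 0).mp (by decide)
  have c02 : ((dsum α β) (f 0) : ℕ) < (dsum α β) (f 2) := (hord 0 2).mp (by decide)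
  by_cases hl : (f 3 : ℕ) < a
  · left
    have hlt : ∀ i : Fin 4, (f i : ℕ) < a := by
      intro i; fin_cases i <;> simp <;> omega
    refine ⟨fun i => ⟨f i, hlt i⟩, ?_, ?_⟩
    · intro i j hij
      have := hmono i j hij
      simp only [Fin.lt_def] at this ⊢
      exact this
    · intro i j
      rw [hord i j]
      simp only [Fin.lt_def]
      rw [dsum_val_lo α β _ (hlt i), dsum_val_lo α β _ (hlt j)]
  · by_cases hh : a ≤ (f 0 : ℕ)
    · right
      have hge : ∀ i : Fin 4, a ≤ (f i : ℕ) := by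
        intro i; fin_cases i <;> simp <;> omega
      refine ⟨fun i => ⟨f i - a, by have := (f i).2; omega⟩, ?_, ?_⟩
      · intro i j hij
        have := hmono i j hij
        have hi := hge i
        have hj := hge j
        simp only [Fin.lt_def] at this ⊢
        omega
      · intro i j
        rw [hord i j]
        simp only [Fin.lt_def]
        rw [dsum_val_hi α β _ (hge i), dsum_val_hi α β _ (hge j)]
        omega
    · exfalso
      have hv : ∀ i : Fin 4, ((f i : ℕ) < a → ((dsum α β) (f i) : ℕ) < a) ∧
          (a ≤ (f i : ℕ) → a ≤ ((dsum α β) (f i) : ℕ)) := by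
        intro i
        constructor
        · intro hia; rw [dsum_val_lo α β _ hia]; exact (α _).2
        · intro hia; rw [dsum_val_hi α β _ hia]; omega
      have h0 := hv 0; have h1 := hv 1; have h2 := hv 2; have h3 := hv 3
      omega



theorem ssum_2413 {a b : ℕ} {α : Equiv.Perm (Fin a)} {β : Equiv.Perm (Fin b)}
    (h : ContainsPat (ssum α β) ![2,4,1,3]) :
    ContainsPat α ![2,4,1,3] ∨ ContainsPat β ![2,4,1,3] := by
  obtain ⟨f, hmono, hord⟩ := h
  have m01 : (f 0 : ℕ) < f 1 := hmono 0 1 (by decide)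
  have m12 : (f 1 : ℕ) < f 2 := hmono 1 2 (by decide)
  have m23 : (f 2 : ℕ) < f 3 := hmono 2 3 (by decide)
  have c20 : ((ssum α β) (f 2) : ℕ) < (ssum α β) (f 0) := (hord 2 0).mp (by decide)
  have c03 : ((ssum α β) (f 0) : ℕ) < (ssum α β) (f 3) := (hord 0 3).mp (by decide)
  have c31 : ((ssum α β) (f 3) : ℕ) < (ssum α β) (f 1) := (hord 3 1).mp (by decide)
  by_cases hl : (f 3 : ℕ) < a
  · left
    have hlt : ∀ i : Fin 4, (f i : ℕ) < a := by
      intro i; fin_cases i <;> simp <;> omega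
    refine ⟨fun i => ⟨f i, hlt i⟩, ?_, ?_⟩
    · intro i j hij
      have := hmono i j hij
      simp only [Fin.lt_def] at this ⊢
      exact this
    · intro i j
      rw [hord i j]
      simp only [Fin.lt_def]
      rw [ssum_val_lo α β _ (hlt i), ssum_val_lo α β _ (hlt j)]
      omega
  · by_cases hh : a ≤ (f 0 : ℕ)
    · right
      have hge : ∀ i : Fin 4, a ≤ (f i : ℕ) := by
        intro i; fin_cases i <;> simp <;> omega
      refine ⟨fun i => ⟨f i - a, by have := (f i).2; omega⟩, ?_, ?_⟩
      · intro i j hij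
        have := hmono i j hij
        have hi := hge i
        have hj := hge j
        simp only [Fin.lt_def] at this ⊢
        omega
      · intro i j
        rw [hord i j]
        simp only [Fin.lt_def]
        rw [ssum_val_hi α β _ (hge i), ssum_val_hi α β _ (hge j)]
    · exfalso
      have hv : ∀ i : Fin 4, ((f i : ℕ) < a → b ≤ ((ssum α β) (f i) : ℕ)) ∧
          (a ≤ (f i : ℕ) → ((ssum α β) (f i) : ℕ) < b) := by
        intro i
        constructor
        · intro hia; rw [ssum_val_lo α β _ hia]; omega
        · intro hia; rw [ssum_val_hi α β _ hia]; exact (β _).2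
      have h0 := hv 0; have h1 := hv 1; have h2 := hv 2; have h3 := hv 3
      omega



theorem ssum_3142 {a b : ℕ} {α : Equiv.Perm (Fin a)} {β : Equiv.Perm (Fin b)}
    (h : ContainsPat (ssum α β) ![3,1,4,2]) :
    ContainsPat α ![3,1,4,2] ∨ ContainsPat β ![3,1,4,2] := by
  obtain ⟨f, hmono, hord⟩ := h
  have m01 : (f 0 : ℕ) < f 1 := hmono 0 1 (by decide)
  have m12 : (f 1 : ℕ) < f 2 := hmono 1 2 (by decide)
  have m23 : (f 2 : ℕ) < f 3 := hmono 2 3 (by decide)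
  have c13 : ((ssum α β) (f 1) : ℕ) < (ssum α β) (f 3) := (hord 1 3).mp (by decide)
  have c30 : ((ssum α β) (f 3) : ℕ) < (ssum α β) (f 0) := (hord 3 0).mp (by decide)
  have c02 : ((ssum α β) (f 0) : ℕ) < (ssum α β) (f 2) := (hord 0 2).mp (by decide)
  by_cases hl : (f 3 : ℕ) < a
  · left
    have hlt : ∀ i : Fin 4, (f i : ℕ) < a := by
      intro i; fin_cases i <;> simp <;> omega
    refine ⟨fun i => ⟨f i, hlt i⟩, ?_, ?_⟩
    · intro i j hij
      have := hmono i j hij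
      simp only [Fin.lt_def] at this ⊢
      exact this
    · intro i j
      rw [hord i j]
      simp only [Fin.lt_def]
      rw [ssum_val_lo α β _ (hlt i), ssum_val_lo α β _ (hlt j)]
      omega
  · by_cases hh : a ≤ (f 0 : ℕ)
    · right
      have hge : ∀ i : Fin 4, a ≤ (f i : ℕ) := by
        intro i; fin_cases i <;> simp <;> omega
      refine ⟨fun i => ⟨f i - a, by have := (f i).2; omega⟩, ?_, ?_⟩
      · intro i j hij
        have := hmono i j hij
        have hi := hge i
        have hj := hge j
        simp only [Fin.lt_def] at this ⊢
        omega
      · intro i j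
        rw [hord i j]
        simp only [Fin.lt_def]
        rw [ssum_val_hi α β _ (hge i), ssum_val_hi α β _ (hge j)]
    · exfalso
      have hv : ∀ i : Fin 4, ((f i : ℕ) < a → b ≤ ((ssum α β) (f i) : ℕ)) ∧
          (a ≤ (f i : ℕ) → ((ssum α β) (f i) : ℕ) < b) := by
        intro i
        constructor
        · intro hia; rw [ssum_val_lo α β _ hia]; omega
        · intro hia; rw [ssum_val_hi α β _ hia]; exact (β _).2
      have h0 := hv 0; have h1 := hv 1; have h2 := hv 2; have h3 := hv 3
      omega


end SepAux

namespace SepAux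

theorem sepPerm_dsum_iff {a b : ℕ} (α : Equiv.Perm (Fin a)) (β : Equiv.Perm (Fin b)) :
    SepPerm (dsum α β) ↔ SepPerm α ∧ SepPerm β := by
  unfold SepPerm
  constructor
  · intro ⟨h1, h2⟩
    exact ⟨⟨fun hc => h1 (containsPat_dsum_left hc), fun hc => h2 (containsPat_dsum_left hc)⟩,
      ⟨fun hc => h1 (containsPat_dsum_right hc), fun hc => h2 (containsPat_dsum_right hc)⟩⟩
  · intro ⟨⟨ha1, ha2⟩, ⟨hb1, hb2⟩⟩
    constructor
    · intro hc; rcases dsum_2413 hc with h | h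
      · exact ha1 h
      · exact hb1 h
    · intro hc; rcases dsum_3142 hc with h | h
      · exact ha2 h
      · exact hb2 h

theorem sepPerm_ssum_iff {a b : ℕ} (α : Equiv.Perm (Fin a)) (β : Equiv.Perm (Fin b)) :
    SepPerm (ssum α β) ↔ SepPerm α ∧ SepPerm β := by
  unfold SepPerm
  constructor
  · intro ⟨h1, h2⟩
    exact ⟨⟨fun hc => h1 (containsPat_ssum_left hc), fun hc => h2 (containsPat_ssum_left hc)⟩,
      ⟨fun hc => h1 (containsPat_ssum_right hc), fun hc => h2 (containsPat_ssum_right hc)⟩⟩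
  · intro ⟨⟨ha1, ha2⟩, ⟨hb1, hb2⟩⟩
    constructor
    · intro hc; rcases ssum_2413 hc with h | h
      · exact ha1 h
      · exact hb1 h
    · intro hc; rcases ssum_3142 hc with h | h
      · exact ha2 h
      · exact hb2 h

def SumDec {n : ℕ} (π : Equiv.Perm (Fin n)) : Prop := ∃ a, 0 < a ∧ a < n ∧ IsCut π a

def SkewDec {n : ℕ} (π : Equiv.Perm (Fin n)) : Prop := ∃ a, 0 < a ∧ a < n ∧ IsCoCut π a

theorem not_sumDec_skewDec {n : ℕ} {π : Equiv.Perm (Fin n)}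
    (h1 : SumDec π) (h2 : SkewDec π) : False := by
  obtain ⟨a, ha0, han, hc⟩ := h1
  obtain ⟨c, hc0, hcn, hcc⟩ := h2
  have hiffa := cut_iff hc
  have hiffc := cocut_iff (le_of_lt hcn) hcc
  have hn : 0 < n := by omega
  set i0 := π.symm ⟨0, hn⟩ with hi0
  set i1 := π.symm ⟨n - 1, by omega⟩ with hi1
  have e0 : (π i0 : ℕ) = 0 := by rw [hi0, Equiv.apply_symm_apply]
  have e1 : (π i1 : ℕ) = n - 1 := by rw [hi1, Equiv.apply_symm_apply]
  have f1 := hiffa i0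
  have f2 := hiffc i0
  have f3 := hiffa i1
  have f4 := hiffc i1
  rw [e0] at f1 f2
  rw [e1] at f3 f4
  omega

/-- Transport a permutation along an equality of lengths. -/
def castPerm {m n : ℕ} (h : m = n) (π : Equiv.Perm (Fin m)) : Equiv.Perm (Fin n) :=
  Equiv.permCongr (finCongr h) π

theorem permVal_castPerm {m n : ℕ} (h : m = n) (π : Equiv.Perm (Fin m)) (i : ℕ) :
    permVal (castPerm h π) i = permVal π i := by
  subst h
  unfold castPerm permVal
  split
  · simp [Equiv.permCongr, finCongr]
  · rfl

theorem perm_ext_permVal {n : ℕ} {π σ : Equiv.Perm (Fin n)}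
    (h : ∀ i, permVal π i = permVal σ i) : π = σ := by
  apply Equiv.ext
  intro i
  apply Fin.ext
  have := h i
  unfold permVal at this
  rwa [dif_pos i.2, dif_pos i.2] at this

theorem desNum_castPerm {m n : ℕ} (h : m = n) (π : Equiv.Perm (Fin m)) :
    desNum (castPerm h π) = desNum π := by subst h; rw [desNum_eq_sum, desNum_eq_sum]; simp [permVal_castPerm]

theorem sepPerm_castPerm {m n : ℕ} (h : m = n) (π : Equiv.Perm (Fin m)) :
    SepPerm (castPerm h π) ↔ SepPerm π := by
  subst h
  have : castPerm rfl π = π := by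
    apply perm_ext_permVal; intro i; rw [permVal_castPerm]
  rw [this]

theorem isCut_castPerm {m n : ℕ} (h : m = n) (π : Equiv.Perm (Fin m)) (a : ℕ) :
    IsCut (castPerm h π) a ↔ IsCut π a := by
  subst h
  have : castPerm rfl π = π := by
    apply perm_ext_permVal; intro i; rw [permVal_castPerm]
  rw [this]

theorem isCoCut_castPerm {m n : ℕ} (h : m = n) (π : Equiv.Perm (Fin m)) (a : ℕ) :
    IsCoCut (castPerm h π) a ↔ IsCoCut π a := by
  subst h
  have : castPerm rfl π = π := by
    apply perm_ext_permVal; intro i; rw [permVal_castPerm]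
  rw [this]

end SepAux

namespace SepAux

theorem permVal_ge {n : ℕ} (π : Equiv.Perm (Fin n)) {i : ℕ} (h : n ≤ i) :
    permVal π i = 0 := by unfold permVal; rw [dif_neg (by omega)]

theorem permVal_inj {n : ℕ} (π : Equiv.Perm (Fin n)) {i j : ℕ} (hi : i < n) (hj : j < n)
    (h : permVal π i = permVal π j) : i = j := by
  unfold permVal at h
  rw [dif_pos hi, dif_pos hj] at h
  have := π.injective (Fin.ext h)
  exact congrArg Fin.val this

noncomputable def mkPerm {m : ℕ} (g : Fin m → Fin m) (hg : Function.Injective g) :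
    Equiv.Perm (Fin m) :=
  Equiv.ofBijective g (Finite.injective_iff_bijective.mp hg)

theorem mkPerm_apply {m : ℕ} (g : Fin m → Fin m) (hg : Function.Injective g) (i : Fin m) :
    mkPerm g hg i = g i := rfl

/-- numeric cut condition -/
def CutN {n : ℕ} (π : Equiv.Perm (Fin n)) (a : ℕ) : Prop :=
  a ≤ n ∧ ∀ i, i < n → (i < a ↔ permVal π i < a)

def CoCutN {n : ℕ} (π : Equiv.Perm (Fin n)) (a : ℕ) : Prop :=
  a ≤ n ∧ ∀ i, i < n → (i < a ↔ n - a ≤ permVal π i)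

noncomputable def lowPart {n : ℕ} (π : Equiv.Perm (Fin n)) (a : ℕ) : Equiv.Perm (Fin a) := by
  classical
  exact if h : CutN π a then
    mkPerm (fun i => ⟨permVal π i.1, by
        have h1 := h.1
        have hi2 := i.2
        exact (h.2 i.1 (by omega)).mp i.2⟩)
      (by
        have h1 := h.1
        intro i j hij
        simp only [Fin.mk.injEq] at hij
        exact Fin.ext (permVal_inj π (by omega) (by omega) hij))
  else 1

noncomputable def highPart {n : ℕ} (π : Equiv.Perm (Fin n)) (a : ℕ) :
    Equiv.Perm (Fin (n - a)) := by
  classical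
  exact if h : CutN π a then
    mkPerm (fun j => ⟨permVal π (a + j.1) - a, by
        have h1 := h.1
        have hj2 := j.2
        have hb := permVal_lt π (a + j.1) (by omega)
        have := h.2 (a + j.1) (by omega)
        omega⟩)
      (by
        have h1 := h.1
        intro i j hij
        simp only [Fin.mk.injEq] at hij
        have b1 := h.2 (a + i.1) (by omega)
        have b2 := h.2 (a + j.1) (by omega)
        have := permVal_inj π (show a + i.1 < n by omega) (show a + j.1 < n by omega)
          (by omega)
        exact Fin.ext (by omega))
  else 1

noncomputable def sLowPart {n : ℕ} (π : Equiv.Perm (Fin n)) (a : ℕ) : Equiv.Perm (Fin a) := by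
  classical
  exact if h : CoCutN π a then
    mkPerm (fun i => ⟨permVal π i.1 - (n - a), by
        have h1 := h.1
        have hi2 := i.2
        have hb := permVal_lt π i.1 (by omega)
        have := (h.2 i.1 (by omega)).mp i.2
        omega⟩)
      (by
        have h1 := h.1
        intro i j hij
        simp only [Fin.mk.injEq] at hij
        have b1 := (h.2 i.1 (by omega)).mp i.2
        have b2 := (h.2 j.1 (by omega)).mp j.2
        have := permVal_inj π (show i.1 < n by omega) (show j.1 < n by omega) (by omega)
        exact Fin.ext (by omega))
  else 1

noncomputable def sHighPart {n : ℕ} (π : Equiv.Perm (Fin n)) (a : ℕ) :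
    Equiv.Perm (Fin (n - a)) := by
  classical
  exact if h : CoCutN π a then
    mkPerm (fun j => ⟨permVal π (a + j.1), by
        have h1 := h.1
        have hj2 := j.2
        have := h.2 (a + j.1) (by omega)
        have hb := permVal_lt π (a + j.1) (by omega)
        omega⟩)
      (by
        have h1 := h.1
        intro i j hij
        simp only [Fin.mk.injEq] at hij
        have := permVal_inj π (show a + i.1 < n by omega) (show a + j.1 < n by omega) hij
        exact Fin.ext (by omega))
  else 1

theorem lowPart_val {n : ℕ} {π : Equiv.Perm (Fin n)} {a : ℕ} (h : CutN π a) (i : ℕ)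
    (hi : i < a) : permVal (lowPart π a) i = permVal π i := by
  have h1 := h.1
  unfold lowPart
  rw [dif_pos h]
  unfold permVal
  rw [dif_pos hi]
  show permVal π i = _
  unfold permVal
  rw [dif_pos (by omega)]

theorem highPart_val {n : ℕ} {π : Equiv.Perm (Fin n)} {a : ℕ} (h : CutN π a) (j : ℕ)
    (hj : j < n - a) : permVal (highPart π a) j = permVal π (a + j) - a := by
  have h1 := h.1
  unfold highPart
  rw [dif_pos h]
  unfold permVal
  rw [dif_pos hj]
  show permVal π (a + j) - a = _
  unfold permVal
  rw [dif_pos (by omega)]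

theorem sLowPart_val {n : ℕ} {π : Equiv.Perm (Fin n)} {a : ℕ} (h : CoCutN π a) (i : ℕ)
    (hi : i < a) : permVal (sLowPart π a) i = permVal π i - (n - a) := by
  have h1 := h.1
  unfold sLowPart
  rw [dif_pos h]
  unfold permVal
  rw [dif_pos hi]
  show permVal π i - (n - a) = _
  unfold permVal
  rw [dif_pos (by omega)]

theorem sHighPart_val {n : ℕ} {π : Equiv.Perm (Fin n)} {a : ℕ} (h : CoCutN π a) (j : ℕ)
    (hj : j < n - a) : permVal (sHighPart π a) j = permVal π (a + j) := by
  have h1 := h.1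
  unfold sHighPart
  rw [dif_pos h]
  unfold permVal
  rw [dif_pos hj]
  show permVal π (a + j) = _
  unfold permVal
  rw [dif_pos (by omega)]

end SepAux

namespace SepAux

def glueD {n : ℕ} (a : ℕ) (h : a ≤ n) (α : Equiv.Perm (Fin a)) (β : Equiv.Perm (Fin (n - a))) :
    Equiv.Perm (Fin n) := castPerm (by omega) (dsum α β)

def glueS {n : ℕ} (a : ℕ) (h : a ≤ n) (α : Equiv.Perm (Fin a)) (β : Equiv.Perm (Fin (n - a))) :
    Equiv.Perm (Fin n) := castPerm (by omega) (ssum α β)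

theorem permVal_glueD {n a : ℕ} (h : a ≤ n) (α : Equiv.Perm (Fin a))
    (β : Equiv.Perm (Fin (n - a))) {i : ℕ} (hi : i < n) :
    permVal (glueD a h α β) i = if i < a then permVal α i else a + permVal β (i - a) := by
  unfold glueD
  rw [permVal_castPerm, permVal_dsum α β i (by omega)]

theorem permVal_glueS {n a : ℕ} (h : a ≤ n) (α : Equiv.Perm (Fin a))
    (β : Equiv.Perm (Fin (n - a))) {i : ℕ} (hi : i < n) :
    permVal (glueS a h α β) i = if i < a then (n - a) + permVal α i else permVal β (i - a) := by
  unfold glueS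
  rw [permVal_castPerm, permVal_ssum α β i (by omega)]

theorem cutN_glueD {n a : ℕ} (h : a ≤ n) (α : Equiv.Perm (Fin a))
    (β : Equiv.Perm (Fin (n - a))) : CutN (glueD a h α β) a := by
  refine ⟨h, fun i hi => ?_⟩
  rw [permVal_glueD h α β hi]
  by_cases hia : i < a
  · rw [if_pos hia]
    have := permVal_lt α i (by omega)
    omega
  · rw [if_neg hia]
    omega

theorem coCutN_glueS {n a : ℕ} (h : a ≤ n) (α : Equiv.Perm (Fin a))
    (β : Equiv.Perm (Fin (n - a))) : CoCutN (glueS a h α β) a := by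
  refine ⟨h, fun i hi => ?_⟩
  rw [permVal_glueS h α β hi]
  by_cases hia : i < a
  · rw [if_pos hia]
    omega
  · rw [if_neg hia]
    have := permVal_lt β (i - a) (by omega)
    omega

theorem lowPart_glueD {n a : ℕ} (h : a ≤ n) (α : Equiv.Perm (Fin a))
    (β : Equiv.Perm (Fin (n - a))) : lowPart (glueD a h α β) a = α := by
  apply perm_ext_permVal
  intro i
  by_cases hia : i < a
  · rw [lowPart_val (cutN_glueD h α β) i hia, permVal_glueD h α β (by omega), if_pos hia]
  · rw [permVal_ge _ (by omega), permVal_ge _ (by omega)]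

theorem highPart_glueD {n a : ℕ} (h : a ≤ n) (α : Equiv.Perm (Fin a))
    (β : Equiv.Perm (Fin (n - a))) : highPart (glueD a h α β) a = β := by
  apply perm_ext_permVal
  intro j
  by_cases hj : j < n - a
  · rw [highPart_val (cutN_glueD h α β) j hj, permVal_glueD h α β (by omega),
      if_neg (by omega)]
    have e : a + j - a = j := by omega
    rw [e]
    omega
  · rw [permVal_ge _ (by omega), permVal_ge _ (by omega)]

theorem sLowPart_glueS {n a : ℕ} (h : a ≤ n) (α : Equiv.Perm (Fin a))
    (β : Equiv.Perm (Fin (n - a))) : sLowPart (glueS a h α β) a = α := by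
  apply perm_ext_permVal
  intro i
  by_cases hia : i < a
  · rw [sLowPart_val (coCutN_glueS h α β) i hia, permVal_glueS h α β (by omega), if_pos hia]
    omega
  · rw [permVal_ge _ (by omega), permVal_ge _ (by omega)]

theorem sHighPart_glueS {n a : ℕ} (h : a ≤ n) (α : Equiv.Perm (Fin a))
    (β : Equiv.Perm (Fin (n - a))) : sHighPart (glueS a h α β) a = β := by
  apply perm_ext_permVal
  intro j
  by_cases hj : j < n - a
  · rw [sHighPart_val (coCutN_glueS h α β) j hj, permVal_glueS h α β (by omega),
      if_neg (by omega)]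
    have e : a + j - a = j := by omega
    rw [e]
  · rw [permVal_ge _ (by omega), permVal_ge _ (by omega)]

theorem recon_glueD {n a : ℕ} {π : Equiv.Perm (Fin n)} (h : CutN π a) :
    glueD a h.1 (lowPart π a) (highPart π a) = π := by
  apply perm_ext_permVal
  intro i
  by_cases hi : i < n
  · rw [permVal_glueD h.1 _ _ hi]
    by_cases hia : i < a
    · rw [if_pos hia, lowPart_val h i hia]
    · rw [if_neg hia, highPart_val h (i - a) (by omega)]
      have e : a + (i - a) = i := by omega
      rw [e]
      have := h.2 i hi
      omega
  · rw [permVal_ge _ (by omega), permVal_ge _ (by omega)]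

theorem recon_glueS {n a : ℕ} {π : Equiv.Perm (Fin n)} (h : CoCutN π a) :
    glueS a h.1 (sLowPart π a) (sHighPart π a) = π := by
  apply perm_ext_permVal
  intro i
  by_cases hi : i < n
  · rw [permVal_glueS h.1 _ _ hi]
    by_cases hia : i < a
    · rw [if_pos hia, sLowPart_val h i hia]
      have := (h.2 i hi).mp hia
      omega
    · rw [if_neg hia, sHighPart_val h (i - a) (by omega)]
      have e : a + (i - a) = i := by omega
      rw [e]
  · rw [permVal_ge _ (by omega), permVal_ge _ (by omega)]

theorem desNum_glueD {n a : ℕ} (h : a ≤ n) (h0 : 0 < a) (h1 : a < n)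
    (α : Equiv.Perm (Fin a)) (β : Equiv.Perm (Fin (n - a))) :
    desNum (glueD a h α β) = desNum α + desNum β := by
  unfold glueD
  rw [desNum_castPerm, desNum_dsum h0 (by omega)]

theorem desNum_glueS {n a : ℕ} (h : a ≤ n) (h0 : 0 < a) (h1 : a < n)
    (α : Equiv.Perm (Fin a)) (β : Equiv.Perm (Fin (n - a))) :
    desNum (glueS a h α β) = desNum α + desNum β + 1 := by
  unfold glueS
  rw [desNum_castPerm, desNum_ssum h0 (by omega)]

theorem sepPerm_glueD {n a : ℕ} (h : a ≤ n) (α : Equiv.Perm (Fin a))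
    (β : Equiv.Perm (Fin (n - a))) :
    SepPerm (glueD a h α β) ↔ SepPerm α ∧ SepPerm β := by
  unfold glueD
  rw [sepPerm_castPerm, sepPerm_dsum_iff]

theorem sepPerm_glueS {n a : ℕ} (h : a ≤ n) (α : Equiv.Perm (Fin a))
    (β : Equiv.Perm (Fin (n - a))) :
    SepPerm (glueS a h α β) ↔ SepPerm α ∧ SepPerm β := by
  unfold glueS
  rw [sepPerm_castPerm, sepPerm_ssum_iff]

theorem isCut_iff_cutN {n a : ℕ} {π : Equiv.Perm (Fin n)} (han : a ≤ n) :
    IsCut π a ↔ CutN π a := by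
  constructor
  · intro h
    refine ⟨han, fun i hi => ?_⟩
    have := cut_iff h ⟨i, hi⟩
    unfold permVal
    rw [dif_pos hi]
    exact this.symm
  · intro h
    intro x hx
    have := (h.2 x.1 x.2).mp hx
    unfold permVal at this
    rwa [dif_pos x.2] at this

theorem isCoCut_iff_coCutN {n a : ℕ} {π : Equiv.Perm (Fin n)} (han : a ≤ n) :
    IsCoCut π a ↔ CoCutN π a := by
  constructor
  · intro h
    refine ⟨han, fun i hi => ?_⟩
    have := cocut_iff han h ⟨i, hi⟩
    unfold permVal
    rw [dif_pos hi]
    exact this.symm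
  · intro h
    intro x hx
    have := (h.2 x.1 x.2).mp hx
    unfold permVal at this
    rwa [dif_pos x.2] at this

theorem cutN_glueD_low {n a c : ℕ} (h : a ≤ n) (α : Equiv.Perm (Fin a))
    (β : Equiv.Perm (Fin (n - a))) (hc : c ≤ a) :
    CutN (glueD a h α β) c ↔ CutN α c := by
  constructor
  · intro hcut
    refine ⟨hc, fun i hi => ?_⟩
    have := hcut.2 i (by omega)
    rwa [permVal_glueD h α β (by omega), if_pos hi] at this
  · intro hcut
    refine ⟨by omega, fun i hi => ?_⟩
    rw [permVal_glueD h α β (by omega)]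
    by_cases hia : i < a
    · rw [if_pos hia]
      exact hcut.2 i hia
    · rw [if_neg hia]
      omega

theorem coCutN_glueS_low {n a c : ℕ} (h : a ≤ n) (α : Equiv.Perm (Fin a))
    (β : Equiv.Perm (Fin (n - a))) (hc : c ≤ a) :
    CoCutN (glueS a h α β) c ↔ CoCutN α c := by
  constructor
  · intro hcut
    refine ⟨hc, fun i hi => ?_⟩
    have := hcut.2 i (by omega)
    rw [permVal_glueS h α β (by omega), if_pos hi] at this
    have hv := permVal_lt α i (by omega)
    omega
  · intro hcut
    refine ⟨by omega, fun i hi => ?_⟩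
    rw [permVal_glueS h α β (by omega)]
    by_cases hia : i < a
    · rw [if_pos hia]
      have := hcut.2 i hia
      have hv := permVal_lt α i (by omega)
      omega
    · rw [if_neg hia]
      have hv := permVal_lt β (i - a) (by omega)
      omega

end SepAux

namespace SepAux

theorem isCut_top {n : ℕ} (π : Equiv.Perm (Fin n)) : IsCut π n := fun i _ => (π i).2

theorem isCoCut_top {n : ℕ} (π : Equiv.Perm (Fin n)) : IsCoCut π n := by
  intro i _
  omega

noncomputable def minCut {n : ℕ} (π : Equiv.Perm (Fin n)) : ℕ :=
  sInf {a | 0 < a ∧ IsCut π a}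

noncomputable def minCoCut {n : ℕ} (π : Equiv.Perm (Fin n)) : ℕ :=
  sInf {a | 0 < a ∧ IsCoCut π a}

theorem minCut_mem {n : ℕ} (hn : 0 < n) (π : Equiv.Perm (Fin n)) :
    0 < minCut π ∧ IsCut π (minCut π) :=
  Nat.sInf_mem (⟨n, hn, isCut_top π⟩ : {a | 0 < a ∧ IsCut π a}.Nonempty)

theorem minCoCut_mem {n : ℕ} (hn : 0 < n) (π : Equiv.Perm (Fin n)) :
    0 < minCoCut π ∧ IsCoCut π (minCoCut π) :=
  Nat.sInf_mem (⟨n, hn, isCoCut_top π⟩ : {a | 0 < a ∧ IsCoCut π a}.Nonempty)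

theorem minCut_le {n : ℕ} {π : Equiv.Perm (Fin n)} {c : ℕ} (h0 : 0 < c) (h : IsCut π c) :
    minCut π ≤ c := Nat.sInf_le ⟨h0, h⟩

theorem minCoCut_le {n : ℕ} {π : Equiv.Perm (Fin n)} {c : ℕ} (h0 : 0 < c) (h : IsCoCut π c) :
    minCoCut π ≤ c := Nat.sInf_le ⟨h0, h⟩

theorem sumDec_iff {n : ℕ} (hn : 0 < n) (π : Equiv.Perm (Fin n)) :
    SumDec π ↔ minCut π < n := by
  constructor
  · intro ⟨a, h0, h1, hc⟩
    exact lt_of_le_of_lt (minCut_le h0 hc) h1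
  · intro h
    obtain ⟨h0, hc⟩ := minCut_mem hn π
    exact ⟨minCut π, h0, h, hc⟩

theorem skewDec_iff {n : ℕ} (hn : 0 < n) (π : Equiv.Perm (Fin n)) :
    SkewDec π ↔ minCoCut π < n := by
  constructor
  · intro ⟨a, h0, h1, hc⟩
    exact lt_of_le_of_lt (minCoCut_le h0 hc) h1
  · intro h
    obtain ⟨h0, hc⟩ := minCoCut_mem hn π
    exact ⟨minCoCut π, h0, h, hc⟩

theorem minCut_glueD {n a : ℕ} (h : a ≤ n) (h0 : 0 < a) (α : Equiv.Perm (Fin a))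
    (β : Equiv.Perm (Fin (n - a))) (hind : ¬ SumDec α) :
    minCut (glueD a h α β) = a := by
  have hcut : IsCut (glueD a h α β) a := (isCut_iff_cutN h).mpr (cutN_glueD h α β)
  have hle : minCut (glueD a h α β) ≤ a := minCut_le h0 hcut
  rcases Nat.lt_or_ge (minCut (glueD a h α β)) a with hlt | hge
  · exfalso
    obtain ⟨m0, mc⟩ := minCut_mem (by omega) (glueD a h α β)
    have := (cutN_glueD_low h α β (le_of_lt hlt)).mp ((isCut_iff_cutN (by omega)).mp mc)
    exact hind ⟨minCut (glueD a h α β), m0, hlt, (isCut_iff_cutN (le_of_lt hlt)).mpr this⟩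
  · omega

theorem minCoCut_glueS {n a : ℕ} (h : a ≤ n) (h0 : 0 < a) (α : Equiv.Perm (Fin a))
    (β : Equiv.Perm (Fin (n - a))) (hind : ¬ SkewDec α) :
    minCoCut (glueS a h α β) = a := by
  have hcut : IsCoCut (glueS a h α β) a := (isCoCut_iff_coCutN h).mpr (coCutN_glueS h α β)
  have hle : minCoCut (glueS a h α β) ≤ a := minCoCut_le h0 hcut
  rcases Nat.lt_or_ge (minCoCut (glueS a h α β)) a with hlt | hge
  · exfalso
    obtain ⟨m0, mc⟩ := minCoCut_mem (by omega) (glueS a h α β)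
    have := (coCutN_glueS_low h α β (le_of_lt hlt)).mp ((isCoCut_iff_coCutN (by omega)).mp mc)
    exact hind ⟨minCoCut (glueS a h α β), m0, hlt, (isCoCut_iff_coCutN (le_of_lt hlt)).mpr this⟩
  · omega

theorem lowPart_not_sumDec {n : ℕ} {π : Equiv.Perm (Fin n)} (hn : 0 < n) (hd : SumDec π) :
    ¬ SumDec (lowPart π (minCut π)) := by
  intro ⟨c, hc0, hca, hcc⟩
  obtain ⟨m0, mc⟩ := minCut_mem hn π
  have hmn : minCut π ≤ n := by
    rcases hd with ⟨a, a0, a1, ac⟩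
    have := minCut_le a0 ac
    omega
  have hcut : CutN π (minCut π) := (isCut_iff_cutN hmn).mp mc
  have hrec := recon_glueD hcut
  have hcN : CutN (lowPart π (minCut π)) c := (isCut_iff_cutN (by omega)).mp hcc
  have : CutN (glueD (minCut π) hcut.1 (lowPart π (minCut π)) (highPart π (minCut π))) c :=
    (cutN_glueD_low hcut.1 _ _ (by omega)).mpr hcN
  rw [hrec] at this
  have : IsCut π c := (isCut_iff_cutN (by omega)).mpr this
  have := minCut_le hc0 this
  omega

theorem sLowPart_not_skewDec {n : ℕ} {π : Equiv.Perm (Fin n)} (hn : 0 < n) (hd : SkewDec π) :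
    ¬ SkewDec (sLowPart π (minCoCut π)) := by
  intro ⟨c, hc0, hca, hcc⟩
  obtain ⟨m0, mc⟩ := minCoCut_mem hn π
  have hmn : minCoCut π ≤ n := by
    rcases hd with ⟨a, a0, a1, ac⟩
    have := minCoCut_le a0 ac
    omega
  have hcut : CoCutN π (minCoCut π) := (isCoCut_iff_coCutN hmn).mp mc
  have hrec := recon_glueS hcut
  have hcN : CoCutN (sLowPart π (minCoCut π)) c := (isCoCut_iff_coCutN (by omega)).mp hcc
  have : CoCutN (glueS (minCoCut π) hcut.1 (sLowPart π (minCoCut π))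
      (sHighPart π (minCoCut π))) c :=
    (coCutN_glueS_low hcut.1 _ _ (by omega)).mpr hcN
  rw [hrec] at this
  have : IsCoCut π c := (isCoCut_iff_coCutN (by omega)).mpr this
  have := minCoCut_le hc0 this
  omega

end SepAux

namespace SepAux

open scoped Classical in
noncomputable def UPoly (n : ℕ) : Polynomial ℤ :=
  ∑ π ∈ Finset.univ.filter (fun π : Equiv.Perm (Fin n) => SepPerm π ∧ ¬ SumDec π),
    Polynomial.X ^ desNum π

open scoped Classical in
noncomputable def VPoly (n : ℕ) : Polynomial ℤ :=
  ∑ π ∈ Finset.univ.filter (fun π : Equiv.Perm (Fin n) => SepPerm π ∧ ¬ SkewDec π),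
    Polynomial.X ^ desNum π

noncomputable def spz (n : ℕ) : Polynomial ℤ := if n = 0 then 0 else sepPoly n
noncomputable def upz (n : ℕ) : Polynomial ℤ := if n = 0 then 0 else UPoly n
noncomputable def vpz (n : ℕ) : Polynomial ℤ := if n = 0 then 0 else VPoly n

open scoped Classical in
theorem bijD {n a : ℕ} (h1 : 1 ≤ a) (h2 : a < n) :
    (∑ π ∈ Finset.univ.filter
        (fun π : Equiv.Perm (Fin n) => (SepPerm π ∧ SumDec π) ∧ minCut π = a),
      (Polynomial.X : Polynomial ℤ) ^ desNum π)
    = ∑ p ∈ (Finset.univ.filter (fun α : Equiv.Perm (Fin a) => SepPerm α ∧ ¬ SumDec α)) ×ˢ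
        (Finset.univ.filter (fun β : Equiv.Perm (Fin (n - a)) => SepPerm β)),
      (Polynomial.X : Polynomial ℤ) ^ (desNum p.1 + desNum p.2) := by
  have han : a ≤ n := le_of_lt h2
  refine Finset.sum_bij' (fun π _ => (lowPart π a, highPart π a))
    (fun p _ => glueD a han p.1 p.2) ?_ ?_ ?_ ?_ ?_
  · intro π hπ
    simp only [Finset.mem_filter, Finset.mem_univ, true_and] at hπ
    obtain ⟨⟨hsep, hdec⟩, hmc⟩ := hπ
    have hcut : CutN π a := by
      rw [← hmc]
      exact (isCut_iff_cutN (by omega)).mp (minCut_mem (by omega) π).2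
    have hrec := recon_glueD hcut
    rw [← hrec] at hsep
    rw [sepPerm_glueD] at hsep
    simp only [Finset.mem_product, Finset.mem_filter, Finset.mem_univ, true_and]
    refine ⟨⟨hsep.1, ?_⟩, hsep.2⟩
    have := lowPart_not_sumDec (n := n) (π := π) (by omega) hdec
    rwa [hmc] at this
  · intro p hp
    simp only [Finset.mem_product, Finset.mem_filter, Finset.mem_univ, true_and] at hp
    simp only [Finset.mem_filter, Finset.mem_univ, true_and]
    refine ⟨⟨?_, ?_⟩, ?_⟩
    · exact (sepPerm_glueD han p.1 p.2).mpr ⟨hp.1.1, hp.2⟩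
    · exact ⟨a, by omega, h2, (isCut_iff_cutN han).mpr (cutN_glueD han p.1 p.2)⟩
    · exact minCut_glueD han (by omega) p.1 p.2 hp.1.2
  · intro π hπ
    simp only [Finset.mem_filter, Finset.mem_univ, true_and] at hπ
    obtain ⟨⟨hsep, hdec⟩, hmc⟩ := hπ
    have hcut : CutN π a := by
      rw [← hmc]
      exact (isCut_iff_cutN (by omega)).mp (minCut_mem (by omega) π).2
    exact recon_glueD hcut
  · intro p hp
    ext
    · exact congrArg Fin.val (congrFun (congrArg _ (lowPart_glueD han p.1 p.2)) _)
    · exact congrArg Fin.val (congrFun (congrArg _ (highPart_glueD han p.1 p.2)) _)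
  · intro π hπ
    simp only [Finset.mem_filter, Finset.mem_univ, true_and] at hπ
    obtain ⟨⟨hsep, hdec⟩, hmc⟩ := hπ
    have hcut : CutN π a := by
      rw [← hmc]
      exact (isCut_iff_cutN (by omega)).mp (minCut_mem (by omega) π).2
    have hrec := recon_glueD hcut
    have hdes := desNum_glueD han (by omega) h2 (lowPart π a) (highPart π a)
    rw [hrec] at hdes
    rw [hdes]

open scoped Classical in
theorem bijS {n a : ℕ} (h1 : 1 ≤ a) (h2 : a < n) :
    (∑ π ∈ Finset.univ.filter
        (fun π : Equiv.Perm (Fin n) => (SepPerm π ∧ SkewDec π) ∧ minCoCut π = a),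
      (Polynomial.X : Polynomial ℤ) ^ desNum π)
    = ∑ p ∈ (Finset.univ.filter (fun α : Equiv.Perm (Fin a) => SepPerm α ∧ ¬ SkewDec α)) ×ˢ
        (Finset.univ.filter (fun β : Equiv.Perm (Fin (n - a)) => SepPerm β)),
      (Polynomial.X : Polynomial ℤ) ^ (desNum p.1 + desNum p.2 + 1) := by
  have han : a ≤ n := le_of_lt h2
  refine Finset.sum_bij' (fun π _ => (sLowPart π a, sHighPart π a))
    (fun p _ => glueS a han p.1 p.2) ?_ ?_ ?_ ?_ ?_
  · intro π hπ
    simp only [Finset.mem_filter, Finset.mem_univ, true_and] at hπ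
    obtain ⟨⟨hsep, hdec⟩, hmc⟩ := hπ
    have hcut : CoCutN π a := by
      rw [← hmc]
      exact (isCoCut_iff_coCutN (by omega)).mp (minCoCut_mem (by omega) π).2
    have hrec := recon_glueS hcut
    rw [← hrec] at hsep
    rw [sepPerm_glueS] at hsep
    simp only [Finset.mem_product, Finset.mem_filter, Finset.mem_univ, true_and]
    refine ⟨⟨hsep.1, ?_⟩, hsep.2⟩
    have := sLowPart_not_skewDec (n := n) (π := π) (by omega) hdec
    rwa [hmc] at this
  · intro p hp
    simp only [Finset.mem_product, Finset.mem_filter, Finset.mem_univ, true_and] at hp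
    simp only [Finset.mem_filter, Finset.mem_univ, true_and]
    refine ⟨⟨?_, ?_⟩, ?_⟩
    · exact (sepPerm_glueS han p.1 p.2).mpr ⟨hp.1.1, hp.2⟩
    · exact ⟨a, by omega, h2, (isCoCut_iff_coCutN han).mpr (coCutN_glueS han p.1 p.2)⟩
    · exact minCoCut_glueS han (by omega) p.1 p.2 hp.1.2
  · intro π hπ
    simp only [Finset.mem_filter, Finset.mem_univ, true_and] at hπ
    obtain ⟨⟨hsep, hdec⟩, hmc⟩ := hπ
    have hcut : CoCutN π a := by
      rw [← hmc]
      exact (isCoCut_iff_coCutN (by omega)).mp (minCoCut_mem (by omega) π).2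
    exact recon_glueS hcut
  · intro p hp
    ext
    · exact congrArg Fin.val (congrFun (congrArg _ (sLowPart_glueS han p.1 p.2)) _)
    · exact congrArg Fin.val (congrFun (congrArg _ (sHighPart_glueS han p.1 p.2)) _)
  · intro π hπ
    simp only [Finset.mem_filter, Finset.mem_univ, true_and] at hπ
    obtain ⟨⟨hsep, hdec⟩, hmc⟩ := hπ
    have hcut : CoCutN π a := by
      rw [← hmc]
      exact (isCoCut_iff_coCutN (by omega)).mp (minCoCut_mem (by omega) π).2
    have hrec := recon_glueS hcut
    have hdes := desNum_glueS han (by omega) h2 (sLowPart π a) (sHighPart π a)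
    rw [hrec] at hdes
    rw [hdes]

end SepAux

namespace SepAux

theorem containsPat_of_permVal {n : ℕ} (π : Equiv.Perm (Fin n)) (pat : Fin 4 → ℕ)
    (g : Fin 4 → ℕ) (hg : ∀ t, g t < n) (hmono : ∀ t t' : Fin 4, t < t' → g t < g t')
    (hord : ∀ t t' : Fin 4, pat t < pat t' ↔ permVal π (g t) < permVal π (g t')) :
    ContainsPat π pat := by
  refine ⟨fun t => ⟨g t, hg t⟩, ?_, ?_⟩
  · intro i j hij
    simp only [Fin.lt_def]
    exact hmono i j hij
  · intro i j
    rw [hord i j, Fin.lt_def]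
    unfold permVal
    rw [dif_pos (hg i), dif_pos (hg j)]

theorem contains2413 {n : ℕ} (π : Equiv.Perm (Fin n)) {i1 i2 i3 i4 : ℕ} (h : i4 < n)
    (m12 : i1 < i2) (m23 : i2 < i3) (m34 : i3 < i4)
    (o1 : permVal π i3 < permVal π i1) (o2 : permVal π i1 < permVal π i4)
    (o3 : permVal π i4 < permVal π i2) : ContainsPat π ![2, 4, 1, 3] := by
  apply containsPat_of_permVal π _ ![i1, i2, i3, i4]
  · intro t; fin_cases t <;> simp <;> omega
  · intro t t' htt; fin_cases t <;> fin_cases t' <;> simp_all <;> omega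
  · intro t t'; fin_cases t <;> fin_cases t' <;> simp <;> omega

theorem contains3142 {n : ℕ} (π : Equiv.Perm (Fin n)) {i1 i2 i3 i4 : ℕ} (h : i4 < n)
    (m12 : i1 < i2) (m23 : i2 < i3) (m34 : i3 < i4)
    (o1 : permVal π i2 < permVal π i4) (o2 : permVal π i4 < permVal π i1)
    (o3 : permVal π i1 < permVal π i3) : ContainsPat π ![3, 1, 4, 2] := by
  apply containsPat_of_permVal π _ ![i1, i2, i3, i4]
  · intro t; fin_cases t <;> simp <;> omega
  · intro t t' htt; fin_cases t <;> fin_cases t' <;> simp_all <;> omega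
  · intro t t'; fin_cases t <;> fin_cases t' <;> simp <;> omega

end SepAux

namespace SepAux

theorem no_room {n p lo hi : ℕ} (π : Equiv.Perm (Fin n)) (hpn : p ≤ n) (hcard : hi - lo < p)
    (h : ∀ i, i < p → lo ≤ permVal π i ∧ permVal π i < hi) : False := by
  classical
  have hinj : Set.InjOn (fun i => permVal π i) (Finset.range p) := by
    intro i hi j hj hij
    simp only [Finset.coe_range, Set.mem_Iio] at hi hj
    exact permVal_inj π (by omega) (by omega) hij
  have hmaps : ∀ i ∈ Finset.range p, permVal π i ∈ Finset.Ico lo hi := by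
    intro i hi
    rw [Finset.mem_range] at hi
    rw [Finset.mem_Ico]
    exact h i hi
  have := Finset.card_le_card_of_injOn _ hmaps hinj
  rw [Finset.card_range, Nat.card_Ico] at this
  omega

theorem cutN_of_values {n p : ℕ} (π : Equiv.Perm (Fin n)) (hp : p ≤ n)
    (h : ∀ t : Fin n, (t : ℕ) < p → (π.symm t : ℕ) < p) : CutN π p := by
  have hcut : IsCut π.symm p := h
  have hiff := cut_iff hcut
  refine ⟨hp, fun i hi => ?_⟩
  have : permVal π i = (π ⟨i, hi⟩ : ℕ) := by unfold permVal; rw [dif_pos hi]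
  rw [this]
  have h2 := hiff (π ⟨i, hi⟩)
  rw [Equiv.symm_apply_apply] at h2
  simpa using h2
  
theorem coCutN_of_values {n p : ℕ} (π : Equiv.Perm (Fin n)) (hp : p ≤ n)
    (h : ∀ t : Fin n, n - p ≤ (t : ℕ) → (π.symm t : ℕ) < p) : CoCutN π p := by
  classical
  have hsub : (Finset.univ.filter (fun v : Fin n => n - p ≤ (v : ℕ))).image π.symm ⊆
      Finset.univ.filter (fun i : Fin n => (i : ℕ) < p) := by
    intro x hx
    simp only [Finset.mem_image, Finset.mem_filter, Finset.mem_univ, true_and] at hx ⊢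
    obtain ⟨v, hv, rfl⟩ := hx
    exact h v hv
  have hcard : ((Finset.univ.filter (fun v : Fin n => n - p ≤ (v : ℕ))).image π.symm).card =
      (Finset.univ.filter (fun i : Fin n => (i : ℕ) < p)).card := by
    rw [Finset.card_image_of_injective _ π.symm.injective, card_filter_lt hp, card_filter_ge hp]
  have heq := Finset.eq_of_subset_of_card_le hsub (le_of_eq hcard.symm)
  refine ⟨hp, fun i hi => ?_⟩
  have hv : permVal π i = (π ⟨i, hi⟩ : ℕ) := by unfold permVal; rw [dif_pos hi]
  rw [hv]
  constructor
  · intro hip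
    by_contra hc
    push_neg at hc
    have hmem : (⟨i, hi⟩ : Fin n) ∈ Finset.univ.filter (fun i : Fin n => (i : ℕ) < p) := by
      simp [hip]
    rw [← heq] at hmem
    simp only [Finset.mem_image, Finset.mem_filter, Finset.mem_univ, true_and] at hmem
    obtain ⟨v, hv2, hve⟩ := hmem
    have : π ⟨i, hi⟩ = v := by
      rw [← hve, Equiv.apply_symm_apply]
    rw [this] at hc
    omega
  · intro hge
    have := h (π ⟨i, hi⟩) hge
    rwa [Equiv.symm_apply_apply] at this

end SepAux

namespace SepAux

noncomputable def delMax {m : ℕ} (π : Equiv.Perm (Fin (m + 1))) (p : ℕ) :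
    Equiv.Perm (Fin m) := by
  classical
  exact if h : p < m + 1 ∧ permVal π p = m then
    mkPerm (fun i => ⟨if i.1 < p then permVal π i.1 else permVal π (i.1 + 1), by
        have h1 := h.1
        have h2 := h.2
        have hi2 := i.2
        split
        · next hip =>
          have hb := permVal_lt π i.1 (by omega)
          have hne : permVal π i.1 ≠ m := fun he =>
            by have := permVal_inj π (by omega) (by omega) (he.trans h2.symm); omega
          omega
        · next hip =>
          have hb := permVal_lt π (i.1 + 1) (by omega)
          have hne : permVal π (i.1 + 1) ≠ m := fun he =>
            by have := permVal_inj π (by omega) (by omega) (he.trans h2.symm); omega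
          omega⟩)
      (by
        have h1 := h.1
        intro i j hij
        have hi2 := i.2
        have hj2 := j.2
        simp only [Fin.mk.injEq] at hij
        apply Fin.ext
        by_cases hip : i.1 < p <;> by_cases hjp : j.1 < p
        · rw [if_pos hip, if_pos hjp] at hij
          exact permVal_inj π (by omega) (by omega) hij
        · rw [if_pos hip, if_neg hjp] at hij
          have := permVal_inj π (by omega) (by omega) hij
          omega
        · rw [if_neg hip, if_pos hjp] at hij
          have := permVal_inj π (by omega) (by omega) hij
          omega
        · rw [if_neg hip, if_neg hjp] at hij
          have := permVal_inj π (by omega) (by omega) hij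
          omega)
  else 1

theorem delMax_val {m : ℕ} {π : Equiv.Perm (Fin (m + 1))} {p : ℕ} (h1 : p < m + 1)
    (h2 : permVal π p = m) (i : ℕ) (hi : i < m) :
    permVal (delMax π p) i = if i < p then permVal π i else permVal π (i + 1) := by
  unfold delMax
  rw [dif_pos ⟨h1, h2⟩]
  unfold permVal
  rw [dif_pos hi]
  rfl

theorem containsPat_delMax {m : ℕ} {π : Equiv.Perm (Fin (m + 1))} {p : ℕ} (h1 : p < m + 1)
    (h2 : permVal π p = m) {k : ℕ} {pat : Fin k → ℕ}
    (h : ContainsPat (delMax π p) pat) : ContainsPat π pat := by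
  obtain ⟨f, hmono, hord⟩ := h
  refine ⟨fun t => ⟨if (f t).1 < p then (f t).1 else (f t).1 + 1, by
      have := (f t).2; split <;> omega⟩, ?_, ?_⟩
  · intro t t' htt
    have := hmono t t' htt
    rw [Fin.lt_def] at this ⊢
    simp only
    split <;> split <;> omega
  · intro t t'
    rw [hord t t']
    rw [Fin.lt_def, Fin.lt_def]
    have key : ∀ t : Fin k, (π ⟨if (f t).1 < p then (f t).1 else (f t).1 + 1, by
        have := (f t).2; split <;> omega⟩ : ℕ) = ((delMax π p) (f t) : ℕ) := by
      intro s
      have hd := delMax_val h1 h2 (f s).1 (f s).2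
      have hL : permVal (delMax π p) (f s).1 = ((delMax π p) (f s) : ℕ) := by
        unfold permVal
        rw [dif_pos (f s).2]
      have hR : permVal π (if (f s).1 < p then (f s).1 else (f s).1 + 1)
          = (π ⟨if (f s).1 < p then (f s).1 else (f s).1 + 1, by
              have := (f s).2; split <;> omega⟩ : ℕ) := by
        unfold permVal
        rw [dif_pos]
      rw [← hR, ← hL, hd]
      split <;> rfl
    rw [key t, key t']

theorem sep_delMax {m : ℕ} {π : Equiv.Perm (Fin (m + 1))} {p : ℕ} (h1 : p < m + 1)
    (h2 : permVal π p = m) (h : SepPerm π) : SepPerm (delMax π p) :=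
  ⟨fun hc => h.1 (containsPat_delMax h1 h2 hc),
   fun hc => h.2 (containsPat_delMax h1 h2 hc)⟩

end SepAux

namespace SepAux

theorem decompAux : ∀ n : ℕ, 2 ≤ n → ∀ π : Equiv.Perm (Fin n), SepPerm π →
    SumDec π ∨ SkewDec π := by
  intro n
  induction n using Nat.strong_induction_on with
  | _ n IH =>
  intro hn π hsep
  rcases eq_or_lt_of_le hn with h2 | h3
  · subst h2
    have hv0 := permVal_lt π 0 (by omega)
    have hv1 := permVal_lt π 1 (by omega)
    have hne : permVal π 1 ≠ permVal π 0 := fun he => by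
      have := permVal_inj π (by omega) (by omega) he; omega
    rcases Nat.lt_or_ge (permVal π 0) 1 with h | h
    · left
      refine ⟨1, by omega, by omega, (isCut_iff_cutN (by omega)).mpr ⟨by omega, ?_⟩⟩
      intro i hi
      interval_cases i <;> omega
    · right
      refine ⟨1, by omega, by omega, (isCoCut_iff_coCutN (by omega)).mpr ⟨by omega, ?_⟩⟩
      intro i hi
      interval_cases i <;> omega
  · obtain ⟨m, rfl⟩ : ∃ m, n = m + 1 := ⟨n - 1, by omega⟩
    have hm2 : 2 ≤ m := by omega
    set p := ((π.symm ⟨m, by omega⟩ : Fin (m + 1)) : ℕ) with hpdef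
    have hpm : p < m + 1 := (π.symm ⟨m, by omega⟩).2
    have hvp : permVal π p = m := by
      unfold permVal
      rw [dif_pos hpm]
      have e : (⟨p, hpm⟩ : Fin (m + 1)) = π.symm ⟨m, by omega⟩ := Fin.ext rfl
      rw [e, Equiv.apply_symm_apply]
    set σ := delMax π p with hσdef
    have hσsep : SepPerm σ := sep_delMax hpm hvp hsep
    have hval_lo : ∀ i, i < p → permVal π i = permVal σ i := by
      intro i hip
      rw [hσdef, delMax_val hpm hvp i (by omega), if_pos hip]
    have hval_hi : ∀ i, p < i → i < m + 1 → permVal π i = permVal σ (i - 1) := by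
      intro i hip him
      rw [hσdef, delMax_val hpm hvp (i - 1) (by omega), if_neg (by omega)]
      congr 1
      omega
    have hvb : ∀ i, i < m + 1 → permVal π i < m + 1 := fun i _ => permVal_lt π i (by omega)
    have hσb : ∀ i, permVal σ i < m := fun i => permVal_lt σ i (by omega)
    rcases IH m (by omega) (by omega) σ hσsep with ⟨k, hk0, hkm, hkc⟩ | ⟨k, hk0, hkm, hkc⟩
    · -- σ sum-decomposable at k
      have hσiff := ((isCut_iff_cutN (by omega)).mp hkc).2
      by_cases hpk : k ≤ p
      · left
        refine ⟨k, hk0, by omega, (isCut_iff_cutN (by omega)).mpr ⟨by omega, ?_⟩⟩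
        intro i hi
        by_cases hip : i < p
        · have h1 := hval_lo i hip
          by_cases him : i < m
          · have := hσiff i him
            omega
          · omega
        · by_cases hip2 : i = p
          · have hvi : permVal π i = m := by rw [hip2]; exact hvp
            omega
          · have hgt : p < i := by omega
            have h1 := hval_hi i hgt (by omega)
            have := hσiff (i - 1) (by omega)
            omega
      · by_cases hp0 : p = 0
        · right
          refine ⟨1, by omega, by omega, (isCoCut_iff_coCutN (by omega)).mpr ⟨by omega, ?_⟩⟩
          intro i hi
          by_cases hi0 : i = 0
          · have hvi : permVal π i = m := by rw [hi0, ← hp0]; exact hvp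
            omega
          · have h1 := hval_hi i (by omega) (by omega)
            have := hσb (i - 1)
            omega
        · by_cases hinv : ∃ i q, i < p ∧ p < q ∧ q ≤ k ∧ permVal π q < permVal π i
          · exfalso
            obtain ⟨i, q, hi, hq1, hq2, hqi⟩ := hinv
            have e2 := hval_hi (k + 1) (by omega) (by omega)
            have e2' : k + 1 - 1 = k := by omega
            rw [e2'] at e2
            have f2 := hσiff k (by omega)
            apply hsep.1
            apply contains2413 π (show k + 1 < m + 1 by omega) hi hq1 (by omega) hqi
            · have e1 := hval_lo i hi
              have f1 := hσiff i (by omega)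
              omega
            · have := hσb k
              omega
          · push_neg at hinv
            left
            refine ⟨p, by omega, by omega, (isCut_iff_cutN (by omega)).mpr
              (cutN_of_values π (by omega) ?_)⟩
            intro t htp
            by_contra hc
            push_neg at hc
            set q := ((π.symm t : Fin (m + 1)) : ℕ) with hqdef
            have hqb : q < m + 1 := (π.symm t).2
            have hq : permVal π q = (t : ℕ) := by
              unfold permVal
              rw [dif_pos hqb]
              have e : (⟨q, hqb⟩ : Fin (m + 1)) = π.symm t := Fin.ext rfl
              rw [e, Equiv.apply_symm_apply]
            have hqp : q ≠ p := by
              intro he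
              rw [he, hvp] at hq
              omega
            have hqgt : p < q := by omega
            by_cases hqk : q ≤ k
            · exact no_room π (p := p) (lo := 0) (hi := (t : ℕ)) (by omega) (by omega)
                (fun i hip => by
                  have h5 := hinv i q hip hqgt hqk
                  have hne2 : permVal π i ≠ permVal π q := fun he => by
                    have := permVal_inj π (by omega) (by omega) he
                    omega
                  exact ⟨by omega, by omega⟩)
            · have h1 := hval_hi q hqgt (by omega)
              have := hσiff (q - 1) (by omega)
              omega
    · -- σ skew-decomposable at k
      have hσiff := ((isCoCut_iff_coCutN (by omega)).mp hkc).2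
      by_cases hpk : p ≤ k
      · right
        refine ⟨k + 1, by omega, by omega, (isCoCut_iff_coCutN (by omega)).mpr
          ⟨by omega, ?_⟩⟩
        intro i hi
        by_cases hip2 : i = p
        · have hvi : permVal π i = m := by rw [hip2]; exact hvp
          omega
        · by_cases hip : i < p
          · have h1 := hval_lo i hip
            have := hσiff i (by omega)
            omega
          · have hgt : p < i := by omega
            have h1 := hval_hi i hgt (by omega)
            have := hσiff (i - 1) (by omega)
            omega
      · by_cases hpm2 : p = m
        · left
          refine ⟨m, by omega, by omega, (isCut_iff_cutN (by omega)).mpr ⟨by omega, ?_⟩⟩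
          intro i hi
          by_cases hip : i = p
          · have hvi : permVal π i = m := by rw [hip]; exact hvp
            omega
          · have h1 := hval_lo i (by omega)
            have := hσb i
            omega
        · by_cases hinv : ∃ q j, k ≤ q ∧ q < p ∧ p < j ∧ j ≤ m ∧ permVal π q < permVal π j
          · exfalso
            obtain ⟨q, j, hq1, hq2, hj1, hj2, hqj⟩ := hinv
            have e0 := hval_lo 0 (by omega)
            have f0 := hσiff 0 (by omega)
            have ej := hval_hi j hj1 (by omega)
            have fj := hσiff (j - 1) (by omega)
            apply hsep.2
            apply contains3142 π (show j < m + 1 by omega) (show 0 < q by omega) hq2 hj1 hqj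
            · omega
            · have := hσb 0
              omega
          · push_neg at hinv
            right
            refine ⟨p + 1, by omega, by omega, (isCoCut_iff_coCutN (by omega)).mpr
              (coCutN_of_values π (by omega) ?_)⟩
            intro t htt
            by_contra hc
            push_neg at hc
            set j := ((π.symm t : Fin (m + 1)) : ℕ) with hjdef
            have hjb : j < m + 1 := (π.symm t).2
            have hj : permVal π j = (t : ℕ) := by
              unfold permVal
              rw [dif_pos hjb]
              have e : (⟨j, hjb⟩ : Fin (m + 1)) = π.symm t := Fin.ext rfl
              rw [e, Equiv.apply_symm_apply]
            have hjgt : p < j := by omega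
            have htm : (t : ℕ) ≠ m := fun he => by
              have : permVal π j = permVal π p := by rw [hj, hvp, he]
              have := permVal_inj π (by omega) (by omega) this
              omega
            have ej := hval_hi j hjgt (by omega)
            have fj := hσiff (j - 1) (by omega)
            refine no_room π (p := p + 1) (lo := (t : ℕ) + 1) (hi := m + 1) (by omega)
              (by omega) ?_
            intro i hip
            refine ⟨?_, hvb i (by omega)⟩
            by_cases hik : i < k
            · have e1 := hval_lo i (by omega)
              have f1 := hσiff i (by omega)
              omega
            · by_cases hipp : i = p
              · have hvi : permVal π i = m := by rw [hipp]; exact hvp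
                omega
              · have e1 := hval_lo i (by omega)
                have h5 := hinv i j (by omega) (by omega) hjgt (by omega)
                have hne2 : permVal π i ≠ permVal π j := fun he => by
                  have := permVal_inj π (by omega) (by omega) he
                  omega
                omega

theorem decomp' {n : ℕ} (hn : 2 ≤ n) (π : Equiv.Perm (Fin n)) (hsep : SepPerm π) :
    SumDec π ∨ SkewDec π := decompAux n hn π hsep

end SepAux

namespace SepAux

/-- The structure theorem: a separable permutation of length ≥ 2 decomposes. -/
theorem decomp {n : ℕ} (hn : 2 ≤ n) (π : Equiv.Perm (Fin n)) (hsep : SepPerm π) :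
    SumDec π ∨ SkewDec π := decompAux n hn π hsep

open scoped Classical in
theorem sumDecSum (n : ℕ) :
    (∑ π ∈ Finset.univ.filter (fun π : Equiv.Perm (Fin n) => SepPerm π ∧ SumDec π),
      (Polynomial.X : Polynomial ℤ) ^ desNum π)
    = ∑ p ∈ Finset.HasAntidiagonal.antidiagonal n, upz p.1 * spz p.2 := by
  rcases Nat.eq_zero_or_pos n with rfl | hn
  · have hL : (Finset.univ.filter (fun π : Equiv.Perm (Fin 0) => SepPerm π ∧ SumDec π)) = ∅ := by
      apply Finset.filter_false_of_mem
      rintro π - ⟨-, a, h0, h1, -⟩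
      omega
    rw [hL, Finset.sum_empty]
    simp [upz]
  · rw [Finset.Nat.sum_antidiagonal_eq_sum_range_succ_mk]
    have hsub : Finset.Ico 1 n ⊆ Finset.range (n + 1) := by
      intro x hx
      rw [Finset.mem_Ico] at hx
      rw [Finset.mem_range]
      omega
    have hvan : ∀ x ∈ Finset.range (n + 1), x ∉ Finset.Ico 1 n →
        upz x * spz (n - x) = 0 := by
      intro x hx hnx
      rw [Finset.mem_range] at hx
      rw [Finset.mem_Ico] at hnx
      rcases Nat.eq_zero_or_pos x with rfl | hx0
      · rw [upz, if_pos rfl, zero_mul]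
      · have : x = n := by omega
        subst this
        rw [spz, if_pos (by omega), mul_zero]
    rw [← Finset.sum_subset hsub hvan]
    have hmaps : ∀ π ∈ Finset.univ.filter
        (fun π : Equiv.Perm (Fin n) => SepPerm π ∧ SumDec π), minCut π ∈ Finset.Ico 1 n := by
      intro π hπ
      simp only [Finset.mem_filter, Finset.mem_univ, true_and] at hπ
      rw [Finset.mem_Ico]
      exact ⟨(minCut_mem hn π).1, (sumDec_iff hn π).mp hπ.2⟩
    rw [← Finset.sum_fiberwise_of_maps_to hmaps]
    refine Finset.sum_congr rfl ?_
    intro a ha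
    rw [Finset.mem_Ico] at ha
    rw [Finset.filter_filter, bijD ha.1 ha.2]
    rw [upz, if_neg (by omega), spz, if_neg (by omega), UPoly, sepPoly]
    rw [Finset.sum_product, Finset.sum_mul_sum]
    exact Finset.sum_congr rfl fun α _ => Finset.sum_congr rfl fun β _ => pow_add _ _ _

open scoped Classical in
theorem skewDecSum (n : ℕ) :
    (∑ π ∈ Finset.univ.filter (fun π : Equiv.Perm (Fin n) => SepPerm π ∧ SkewDec π),
      (Polynomial.X : Polynomial ℤ) ^ desNum π)
    = Polynomial.X * ∑ p ∈ Finset.HasAntidiagonal.antidiagonal n, vpz p.1 * spz p.2 := by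
  rcases Nat.eq_zero_or_pos n with rfl | hn
  · have hL : (Finset.univ.filter (fun π : Equiv.Perm (Fin 0) => SepPerm π ∧ SkewDec π)) = ∅ := by
      apply Finset.filter_false_of_mem
      rintro π - ⟨-, a, h0, h1, -⟩
      omega
    rw [hL, Finset.sum_empty]
    simp [vpz]
  · rw [Finset.Nat.sum_antidiagonal_eq_sum_range_succ_mk, Finset.mul_sum]
    have hsub : Finset.Ico 1 n ⊆ Finset.range (n + 1) := by
      intro x hx
      rw [Finset.mem_Ico] at hx
      rw [Finset.mem_range]
      omega
    have hvan : ∀ x ∈ Finset.range (n + 1), x ∉ Finset.Ico 1 n →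
        Polynomial.X * (vpz x * spz (n - x)) = 0 := by
      intro x hx hnx
      rw [Finset.mem_range] at hx
      rw [Finset.mem_Ico] at hnx
      rcases Nat.eq_zero_or_pos x with rfl | hx0
      · rw [vpz, if_pos rfl, zero_mul, mul_zero]
      · have : x = n := by omega
        subst this
        rw [spz, if_pos (by omega), mul_zero, mul_zero]
    rw [← Finset.sum_subset hsub hvan]
    have hmaps : ∀ π ∈ Finset.univ.filter
        (fun π : Equiv.Perm (Fin n) => SepPerm π ∧ SkewDec π),
        minCoCut π ∈ Finset.Ico 1 n := by
      intro π hπ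
      simp only [Finset.mem_filter, Finset.mem_univ, true_and] at hπ
      rw [Finset.mem_Ico]
      exact ⟨(minCoCut_mem hn π).1, (skewDec_iff hn π).mp hπ.2⟩
    rw [← Finset.sum_fiberwise_of_maps_to hmaps]
    refine Finset.sum_congr rfl ?_
    intro a ha
    rw [Finset.mem_Ico] at ha
    rw [Finset.filter_filter, bijS ha.1 ha.2]
    rw [vpz, if_neg (by omega), spz, if_neg (by omega), VPoly, sepPoly]
    rw [Finset.sum_product, Finset.sum_mul_sum, Finset.mul_sum]
    refine Finset.sum_congr rfl fun α _ => ?_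
    rw [Finset.mul_sum]
    refine Finset.sum_congr rfl fun β _ => ?_
    ring

theorem sep_one (π : Equiv.Perm (Fin 1)) : SepPerm π := by
  constructor <;>
  · rintro ⟨f, hmono, -⟩
    have := hmono 0 1 (by decide)
    have h0 := (f 0).2
    have h1 := (f 1).2
    rw [Fin.lt_def] at this
    omega

theorem desNum_one (π : Equiv.Perm (Fin 1)) : desNum π = 0 := by
  simp [desNum]

instance : Unique (Equiv.Perm (Fin 1)) :=
  ⟨⟨1⟩, fun π => Equiv.ext fun i => Subsingleton.elim _ _⟩

open scoped Classical in
theorem sepPoly_one : sepPoly 1 = 1 := by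
  rw [sepPoly]
  have : (Finset.univ.filter (fun π : Equiv.Perm (Fin 1) => SepPerm π)) = Finset.univ := by
    apply Finset.filter_true_of_mem
    intro π _
    exact sep_one π
  rw [this, Finset.univ_unique, Finset.sum_singleton, desNum_one, pow_zero]

open scoped Classical in
theorem uPoly_one : UPoly 1 = 1 := by
  rw [UPoly]
  have : (Finset.univ.filter (fun π : Equiv.Perm (Fin 1) => SepPerm π ∧ ¬ SumDec π))
      = Finset.univ := by
    apply Finset.filter_true_of_mem
    intro π _
    refine ⟨sep_one π, ?_⟩
    rintro ⟨a, h0, h1, -⟩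
    omega
  rw [this, Finset.univ_unique, Finset.sum_singleton, desNum_one, pow_zero]

open scoped Classical in
theorem vPoly_one : VPoly 1 = 1 := by
  rw [VPoly]
  have : (Finset.univ.filter (fun π : Equiv.Perm (Fin 1) => SepPerm π ∧ ¬ SkewDec π))
      = Finset.univ := by
    apply Finset.filter_true_of_mem
    intro π _
    refine ⟨sep_one π, ?_⟩
    rintro ⟨a, h0, h1, -⟩
    omega
  rw [this, Finset.univ_unique, Finset.sum_singleton, desNum_one, pow_zero]

theorem antidiagonal_one_sum (f : ℕ → ℕ → Polynomial ℤ) (h0 : ∀ b, f 0 b = 0)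
    (h0' : ∀ a, f a 0 = 0) : ∑ p ∈ Finset.HasAntidiagonal.antidiagonal 1, f p.1 p.2 = 0 := by
  rw [Finset.Nat.sum_antidiagonal_eq_sum_range_succ_mk]
  rw [Finset.sum_range_succ, Finset.sum_range_one, h0, h0']
  simp

open scoped Classical in
theorem identA (n : ℕ) (hn : 1 ≤ n) :
    spz n = (if n = 1 then 1 else 0)
      + (∑ p ∈ Finset.HasAntidiagonal.antidiagonal n, upz p.1 * spz p.2)
      + Polynomial.X * ∑ p ∈ Finset.HasAntidiagonal.antidiagonal n, vpz p.1 * spz p.2 := by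
  rcases eq_or_lt_of_le hn with h1 | h2
  · subst h1
    rw [if_pos rfl, spz, if_neg (by omega), sepPoly_one,
      antidiagonal_one_sum (fun a b => upz a * spz b)
        (fun b => by simp [upz])
        (fun a => by simp [spz]),
      antidiagonal_one_sum (fun a b => vpz a * spz b)
        (fun b => by simp [vpz])
        (fun a => by simp [spz])]
    ring
  · rw [if_neg (by omega), spz, if_neg (by omega)]
    rw [← sumDecSum n, ← skewDecSum n, sepPoly, zero_add]
    rw [← Finset.sum_filter_add_sum_filter_not
      (Finset.univ.filter (fun π : Equiv.Perm (Fin n) => SepPerm π)) (fun π => SumDec π),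
      Finset.filter_filter, Finset.filter_filter]
    congr 1
    apply Finset.sum_congr _ (fun _ _ => rfl)
    apply Finset.filter_congr
    intro π _
    constructor
    · rintro ⟨hs, hd⟩
      exact ⟨hs, (decomp h2 π hs).resolve_left hd⟩
    · rintro ⟨hs, hk⟩
      exact ⟨hs, fun hd => not_sumDec_skewDec hd hk⟩

open scoped Classical in
theorem identB (n : ℕ) (hn : 1 ≤ n) :
    upz n = (if n = 1 then 1 else 0)
      + Polynomial.X * ∑ p ∈ Finset.HasAntidiagonal.antidiagonal n, vpz p.1 * spz p.2 := by
  rcases eq_or_lt_of_le hn with h1 | h2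
  · subst h1
    rw [if_pos rfl, upz, if_neg (by omega), uPoly_one,
      antidiagonal_one_sum (fun a b => vpz a * spz b)
        (fun b => by simp [vpz])
        (fun a => by simp [spz])]
    ring
  · rw [if_neg (by omega), upz, if_neg (by omega)]
    rw [← skewDecSum n, UPoly, zero_add]
    apply Finset.sum_congr _ (fun _ _ => rfl)
    apply Finset.filter_congr
    intro π _
    constructor
    · rintro ⟨hs, hd⟩
      exact ⟨hs, (decomp h2 π hs).resolve_left hd⟩
    · rintro ⟨hs, hk⟩
      exact ⟨hs, fun hd => not_sumDec_skewDec hd hk⟩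

open scoped Classical in
theorem identC (n : ℕ) (hn : 1 ≤ n) :
    vpz n = (if n = 1 then 1 else 0)
      + ∑ p ∈ Finset.HasAntidiagonal.antidiagonal n, upz p.1 * spz p.2 := by
  rcases eq_or_lt_of_le hn with h1 | h2
  · subst h1
    rw [if_pos rfl, vpz, if_neg (by omega), vPoly_one,
      antidiagonal_one_sum (fun a b => upz a * spz b)
        (fun b => by simp [upz])
        (fun a => by simp [spz])]
    ring
  · rw [if_neg (by omega), vpz, if_neg (by omega)]
    rw [← sumDecSum n, VPoly, zero_add]
    apply Finset.sum_congr _ (fun _ _ => rfl)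
    apply Finset.filter_congr
    intro π _
    constructor
    · rintro ⟨hs, hd⟩
      exact ⟨hs, (decomp h2 π hs).resolve_right hd⟩
    · rintro ⟨hs, hk⟩
      exact ⟨hs, fun hd => not_sumDec_skewDec hk hd⟩

end SepAux

namespace SepAux

noncomputable def US : PowerSeries (Polynomial ℚ) :=
  PowerSeries.mk fun n => (upz n).map (Int.castRingHom ℚ)

noncomputable def VS : PowerSeries (Polynomial ℚ) :=
  PowerSeries.mk fun n => (vpz n).map (Int.castRingHom ℚ)

theorem coeff_sepSeries (n : ℕ) :
    (PowerSeries.coeff (R := Polynomial ℚ) n) sepSeries = (spz n).map (Int.castRingHom ℚ) := by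
  rw [sepSeries, PowerSeries.coeff_mk]
  rcases Nat.eq_zero_or_pos n with rfl | hn
  · rw [if_pos rfl, spz, if_pos rfl, Polynomial.map_zero]
  · rw [if_neg (by omega), spz, if_neg (by omega)]

theorem coeff_US (n : ℕ) :
    (PowerSeries.coeff (R := Polynomial ℚ) n) US = (upz n).map (Int.castRingHom ℚ) := by
  rw [US, PowerSeries.coeff_mk]

theorem coeff_VS (n : ℕ) :
    (PowerSeries.coeff (R := Polynomial ℚ) n) VS = (vpz n).map (Int.castRingHom ℚ) := by
  rw [VS, PowerSeries.coeff_mk]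

theorem seriesA : sepSeries = PowerSeries.X + US * sepSeries
    + PowerSeries.C (R := Polynomial ℚ) Polynomial.X * (VS * sepSeries) := by
  ext n
  rw [map_add, map_add, PowerSeries.coeff_X, PowerSeries.coeff_C_mul,
    PowerSeries.coeff_mul, PowerSeries.coeff_mul, coeff_sepSeries]
  rcases Nat.eq_zero_or_pos n with rfl | hn
  · rw [spz, if_pos rfl, Polynomial.map_zero]
    rw [if_neg (by omega)]
    rw [Finset.Nat.antidiagonal_zero]
    simp [coeff_sepSeries, coeff_US, coeff_VS, spz, upz, vpz]
  · have := identA n hn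
    have hmap := congrArg (Polynomial.map (Int.castRingHom ℚ)) this
    rw [Polynomial.map_add, Polynomial.map_add, Polynomial.map_mul, Polynomial.map_X] at hmap
    have e1 : Polynomial.map (Int.castRingHom ℚ) (if n = 1 then 1 else 0)
        = (if n = 1 then 1 else 0 : Polynomial ℚ) := by split <;> simp
    have e2 : Polynomial.map (Int.castRingHom ℚ) (∑ p ∈ Finset.HasAntidiagonal.antidiagonal n, upz p.1 * spz p.2)
        = ∑ p ∈ Finset.HasAntidiagonal.antidiagonal n, (PowerSeries.coeff (R := Polynomial ℚ) p.1) US *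
            (PowerSeries.coeff (R := Polynomial ℚ) p.2) sepSeries := by
      rw [Polynomial.map_sum]
      refine Finset.sum_congr rfl fun p _ => ?_
      rw [Polynomial.map_mul, coeff_US, coeff_sepSeries]
    have e3 : Polynomial.map (Int.castRingHom ℚ) (∑ p ∈ Finset.HasAntidiagonal.antidiagonal n, vpz p.1 * spz p.2)
        = ∑ p ∈ Finset.HasAntidiagonal.antidiagonal n, (PowerSeries.coeff (R := Polynomial ℚ) p.1) VS *
            (PowerSeries.coeff (R := Polynomial ℚ) p.2) sepSeries := by
      rw [Polynomial.map_sum]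
      refine Finset.sum_congr rfl fun p _ => ?_
      rw [Polynomial.map_mul, coeff_VS, coeff_sepSeries]
    rw [hmap, e1, e2, e3]

theorem seriesB : US = PowerSeries.X
    + PowerSeries.C (R := Polynomial ℚ) Polynomial.X * (VS * sepSeries) := by
  ext n
  rw [map_add, PowerSeries.coeff_X, PowerSeries.coeff_C_mul, PowerSeries.coeff_mul, coeff_US]
  rcases Nat.eq_zero_or_pos n with rfl | hn
  · rw [upz, if_pos rfl, Polynomial.map_zero, if_neg (by omega)]
    rw [Finset.Nat.antidiagonal_zero]
    simp [coeff_sepSeries, coeff_VS, spz, vpz]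
  · have := identB n hn
    have hmap := congrArg (Polynomial.map (Int.castRingHom ℚ)) this
    rw [Polynomial.map_add, Polynomial.map_mul, Polynomial.map_X] at hmap
    have e1 : Polynomial.map (Int.castRingHom ℚ) (if n = 1 then 1 else 0)
        = (if n = 1 then 1 else 0 : Polynomial ℚ) := by split <;> simp
    have e3 : Polynomial.map (Int.castRingHom ℚ) (∑ p ∈ Finset.HasAntidiagonal.antidiagonal n, vpz p.1 * spz p.2)
        = ∑ p ∈ Finset.HasAntidiagonal.antidiagonal n, (PowerSeries.coeff (R := Polynomial ℚ) p.1) VS *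
            (PowerSeries.coeff (R := Polynomial ℚ) p.2) sepSeries := by
      rw [Polynomial.map_sum]
      refine Finset.sum_congr rfl fun p _ => ?_
      rw [Polynomial.map_mul, coeff_VS, coeff_sepSeries]
    rw [hmap, e1, e3]

theorem seriesC : VS = PowerSeries.X + US * sepSeries := by
  ext n
  rw [map_add, PowerSeries.coeff_X, PowerSeries.coeff_mul, coeff_VS]
  rcases Nat.eq_zero_or_pos n with rfl | hn
  · rw [vpz, if_pos rfl, Polynomial.map_zero, if_neg (by omega)]
    rw [Finset.Nat.antidiagonal_zero]
    simp [coeff_sepSeries, coeff_US, spz, upz]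
  · have := identC n hn
    have hmap := congrArg (Polynomial.map (Int.castRingHom ℚ)) this
    rw [Polynomial.map_add] at hmap
    have e1 : Polynomial.map (Int.castRingHom ℚ) (if n = 1 then 1 else 0)
        = (if n = 1 then 1 else 0 : Polynomial ℚ) := by split <;> simp
    have e2 : Polynomial.map (Int.castRingHom ℚ) (∑ p ∈ Finset.HasAntidiagonal.antidiagonal n, upz p.1 * spz p.2)
        = ∑ p ∈ Finset.HasAntidiagonal.antidiagonal n, (PowerSeries.coeff (R := Polynomial ℚ) p.1) US *
            (PowerSeries.coeff (R := Polynomial ℚ) p.2) sepSeries := by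
      rw [Polynomial.map_sum]
      refine Finset.sum_congr rfl fun p _ => ?_
      rw [Polynomial.map_mul, coeff_US, coeff_sepSeries]
    rw [hmap, e1, e2]

end SepAux

theorem sepSeries_cubic_equation :
    sepSeries = PowerSeries.X
      + (1 + PowerSeries.C (R := Polynomial ℚ) Polynomial.X) * PowerSeries.X * sepSeries
      + PowerSeries.C (R := Polynomial ℚ) Polynomial.X * PowerSeries.X * sepSeries ^ 2
      + PowerSeries.C (R := Polynomial ℚ) Polynomial.X * sepSeries ^ 3 := by
  have hA := SepAux.seriesA
  have hB := SepAux.seriesB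
  have hC := SepAux.seriesC
  set S := sepSeries
  set U := SepAux.US
  set V := SepAux.VS
  set z := (PowerSeries.X : PowerSeries (Polynomial ℚ))
  set t := PowerSeries.C (R := Polynomial ℚ) Polynomial.X
  have hα : U * (1 + S) = S := by linear_combination hB - hA
  have hV : V = z + S - U := by linear_combination hC + hα
  have hβ : U * (1 + t * S) = z + t * z * S + t * S ^ 2 := by
    linear_combination hB + t * S * hV
  linear_combination (1 + S) * hβ - (1 + t * S) * hα
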